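/- arXiv:2406.12615 — 12 statements merged into one kernel-verified Lean document; each statement's English description precedes it below -/
import Mathlib

section
/- Let f : ℝ^D → ℝ be a two-layer bias-free leaky ReLU network, f(x) = ∑_{h=1}^H w_{2h}·σ(w_{1h}ᵀx) with σ(z) = max(z, αz), α ∈ [0,1]. If f is odd, i.e., f(-x) = -f(x) for all x ∈ ℝ^D, then f is linear: f(x) = ((1+α)/2)·∑_h w_{2h}(w_{1h}ᵀx) for all x ∈ ℝ^D. -/
/-- If a two-layer bias-free leaky ReLU network is odd, it is linear:
f(x) = ((1+α)/2)·∑_h w₂ₕ (w₁ₕᵀx). -/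
theorem stmt_1 (D H : ℕ) (α : ℝ) (hα : α ∈ Set.Icc (0 : ℝ) 1)
    (w1 : Fin H → Fin D → ℝ) (w2 : Fin H → ℝ)
    (f : (Fin D → ℝ) → ℝ)
    (hf : ∀ x, f x = ∑ h, w2 h * max (∑ i, w1 h i * x i) (α * ∑ i, w1 h i * x i))
    (hodd : ∀ x, f (-x) = -f x) :
    ∀ x, f x = ((1 + α) / 2) * ∑ h, w2 h * ∑ i, w1 h i * x i := by
  intro x
  have key : ∀ h : Fin H, w2 h * max (∑ i, w1 h i * x i) (α * ∑ i, w1 h i * x i)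
      - w2 h * max (∑ i, w1 h i * (-x) i) (α * ∑ i, w1 h i * (-x) i)
      = (1 + α) * (w2 h * ∑ i, w1 h i * x i) := by
    intro h
    have hz : ∑ i, w1 h i * (-x) i = -(∑ i, w1 h i * x i) := by
      rw [← Finset.sum_neg_distrib]
      exact Finset.sum_congr rfl fun i _ => by simp [mul_comm]
    rw [hz]
    set z := ∑ i, w1 h i * x i with hzdef
    have h1 : max (-z) (α * -z) = -(min z (α * z)) := by
      rw [mul_neg, max_neg_neg]
    rw [h1]
    have h2 : max z (α * z) + min z (α * z) = z + α * z := max_add_min _ _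
    have h3 : max z (α * z) = z + α * z - min z (α * z) := by linarith
    rw [h3]; ring
  have hsum : f x - f (-x) = (1 + α) * ∑ h, w2 h * ∑ i, w1 h i * x i := by
    rw [hf x, hf (-x), ← Finset.sum_sub_distrib, Finset.mul_sum]
    exact Finset.sum_congr rfl fun h _ => key h
  have h2 : f (-x) = -f x := hodd x
  rw [h2] at hsum
  linarith
end

section
/- Let σ₀(z) = max(z, 0) and define g : ℝ² → ℝ by g(x₁, x₂) = σ₀(σ₀(x₁) − σ₀(x₂)) − σ₀(σ₀(−x₁) − σ₀(−x₂)). Then g is not linear (for instance g(1,0) = 1, g(0,1) = 0, g(1,1) = 0), and consequently no two-layer bias-free leaky ReLU network equals g: for every H, every α ∈ [0,1], and all weights w_{1h} ∈ ℝ², w_{2h} ∈ ℝ, the function x ↦ ∑_{h=1}^H w_{2h}·max(w_{1h}ᵀx, α·w_{1h}ᵀx) differs from g at some point of ℝ². -/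
lemma leaky_odd (α z : ℝ) (_h0 : 0 ≤ α) (h1 : α ≤ 1) :
    max z (α * z) - max (-z) (α * -z) = (1 + α) * z := by
  rcases le_total 0 z with hz | hz
  · rw [max_eq_left (by nlinarith), max_eq_right (by nlinarith)]; ring
  · rw [max_eq_right (by nlinarith), max_eq_left (by nlinarith)]; ring

/-- g(x₁,x₂) = σ₀(σ₀(x₁) − σ₀(x₂)) − σ₀(σ₀(−x₁) − σ₀(−x₂)) is not linear
(g(1,0) = 1, g(0,1) = 0, g(1,1) = 0), and no two-layer bias-free leaky ReLU network
equals g: any such network differs from g at some point of ℝ². -/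
theorem stmt_4 (g : (Fin 2 → ℝ) → ℝ)
    (hg : ∀ x : Fin 2 → ℝ, g x =
      max (max (x 0) 0 - max (x 1) 0) 0 -
        max (max (-(x 0)) 0 - max (-(x 1)) 0) 0) :
    ¬ IsLinearMap ℝ g ∧
    g ![1, 0] = 1 ∧ g ![0, 1] = 0 ∧ g ![1, 1] = 0 ∧
    ∀ (H : ℕ) (α : ℝ), α ∈ Set.Icc (0 : ℝ) 1 →
      ∀ (w1 : Fin H → Fin 2 → ℝ) (w2 : Fin H → ℝ),
        ∃ x : Fin 2 → ℝ,
          (∑ h, w2 h * max (∑ i, w1 h i * x i) (α * ∑ i, w1 h i * x i)) ≠ g x := by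
  have g10 : g ![1, 0] = 1 := by rw [hg]; norm_num
  have g01 : g ![0, 1] = 0 := by rw [hg]; norm_num
  have g11 : g ![1, 1] = 0 := by rw [hg]; norm_num
  have gm10 : g ![-1, 0] = -1 := by rw [hg]; norm_num
  have gm01 : g ![0, -1] = 0 := by rw [hg]; norm_num
  have gm11 : g ![-1, -1] = 0 := by rw [hg]; norm_num
  refine ⟨?_, g10, g01, g11, ?_⟩
  · intro hlin
    have hsum : (![1, 1] : Fin 2 → ℝ) = ![1, 0] + ![0, 1] := by
      ext i; fin_cases i <;> simp
    have := hlin.map_add ![1, 0] ![0, 1]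
    rw [← hsum, g11, g10, g01] at this
    norm_num at this
  · intro H α hα w1 w2
    by_contra hcon
    push_neg at hcon
    -- For any vector v, F v - F (-v) = (1+α) * ∑ h, w2 h * ⟨w1 h, v⟩
    have key : ∀ v v' : Fin 2 → ℝ, (∀ i, v' i = -(v i)) →
        (∑ h, w2 h * max (∑ i, w1 h i * v i) (α * ∑ i, w1 h i * v i)) -
        (∑ h, w2 h * max (∑ i, w1 h i * v' i) (α * ∑ i, w1 h i * v' i)) =
        ∑ h, w2 h * ((1 + α) * ∑ i, w1 h i * v i) := by
      intro v v' hv'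
      rw [← Finset.sum_sub_distrib]
      refine Finset.sum_congr rfl fun h _ => ?_
      have hsv : (∑ i, w1 h i * v' i) = -(∑ i, w1 h i * v i) := by
        rw [← Finset.sum_neg_distrib]
        exact Finset.sum_congr rfl fun i _ => by rw [hv' i]; ring
      rw [hsv, ← mul_sub, leaky_odd α _ hα.1 hα.2]
    have e1 := key ![1, 0] ![-1, 0] (by intro i; fin_cases i <;> norm_num)
    have e2 := key ![0, 1] ![0, -1] (by intro i; fin_cases i <;> norm_num)
    have e3 := key ![1, 1] ![-1, -1] (by intro i; fin_cases i <;> norm_num)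
    rw [hcon ![1, 0], hcon ![-1, 0], g10, gm10] at e1
    rw [hcon ![0, 1], hcon ![0, -1], g01, gm01] at e2
    rw [hcon ![1, 1], hcon ![-1, -1], g11, gm11] at e3
    have hsplit : ∀ h : Fin H,
        w2 h * ((1 + α) * ∑ i, w1 h i * (![1, 1] : Fin 2 → ℝ) i) =
        w2 h * ((1 + α) * ∑ i, w1 h i * (![1, 0] : Fin 2 → ℝ) i) +
        w2 h * ((1 + α) * ∑ i, w1 h i * (![0, 1] : Fin 2 → ℝ) i) := by
      intro h; simp [Fin.sum_univ_two]; ring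
    rw [Finset.sum_congr rfl (fun h _ => hsplit h), Finset.sum_add_distrib] at e3
    linarith
end

section
/- Let {(x_μ, y_μ)}_{μ=1}^P ⊂ ℝ^D × ℝ be a symmetric dataset, let α ∈ [0,1], σ(z) = max(z, αz), and let σ'(z) = 1 for z > 0 and σ'(z) = α for z < 0. Let w ∈ ℝ^D be any vector with wᵀx_μ ≠ 0 for all μ. Then (1/P)·∑_{μ=1}^P σ'(wᵀx_μ)·y_μ·x_μ = ((α+1)/2)·β, and (1/P)·∑_{μ=1}^P y_μ·σ(wᵀx_μ) = ((α+1)/2)·wᵀβ. -/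
lemma key1 {P : ℕ} (π : Equiv.Perm (Fin P)) (s g : Fin P → ℝ) (α : ℝ)
    (hs : ∀ μ, s (π μ) = -s μ) (hg : ∀ μ, g (π μ) = g μ) (hne : ∀ μ, s μ ≠ 0) :
    ∑ μ, (if 0 < s μ then (1:ℝ) else α) * g μ = ((α+1)/2) * ∑ μ, g μ := by
  have h1 : ∑ μ, (if 0 < s μ then (1:ℝ) else α) * g μ
      = ∑ μ, (if 0 < -s μ then (1:ℝ) else α) * g μ := by
    rw [← Equiv.sum_comp π (fun μ => (if 0 < s μ then (1:ℝ) else α) * g μ)]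
    simp only [hs, hg]
  have h2 : (2:ℝ) * ∑ μ, (if 0 < s μ then (1:ℝ) else α) * g μ
      = (α+1) * ∑ μ, g μ := by
    rw [two_mul]
    nth_rewrite 2 [h1]
    rw [← Finset.sum_add_distrib, Finset.mul_sum]
    refine Finset.sum_congr rfl fun μ _ => ?_
    rcases lt_or_gt_of_ne (hne μ) with h | h
    · rw [if_neg (by linarith), if_pos (by linarith)]; ring
    · rw [if_pos h, if_neg (by linarith)]; ring
  linarith

lemma key2 {P : ℕ} (π : Equiv.Perm (Fin P)) (s y : Fin P → ℝ) (α : ℝ)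
    (hs : ∀ μ, s (π μ) = -s μ) (hy : ∀ μ, y (π μ) = -y μ) :
    ∑ μ, y μ * max (s μ) (α * s μ) = ((α+1)/2) * ∑ μ, y μ * s μ := by
  have h1 : ∑ μ, y μ * max (s μ) (α * s μ)
      = ∑ μ, (-y μ) * max (-s μ) (α * -s μ) := by
    rw [← Equiv.sum_comp π (fun μ => y μ * max (s μ) (α * s μ))]
    simp only [hs, hy]
  have h2 : (2:ℝ) * ∑ μ, y μ * max (s μ) (α * s μ)
      = (α+1) * ∑ μ, y μ * s μ := by
    rw [two_mul]
    nth_rewrite 2 [h1]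
    rw [← Finset.sum_add_distrib, Finset.mul_sum]
    refine Finset.sum_congr rfl fun μ _ => ?_
    have : α * -s μ = -(α * s μ) := by ring
    rw [this, max_neg_neg]
    have h := max_add_min (s μ) (α * s μ)
    linear_combination y μ * h
  linarith

/-- For a symmetric dataset and any w with wᵀxμ ≠ 0 for all μ,
(1/P)·∑_μ σ'(wᵀxμ)·yμ·xμ = ((α+1)/2)·β and (1/P)·∑_μ yμ·σ(wᵀxμ) = ((α+1)/2)·wᵀβ,
where σ(z) = max(z,αz), σ'(z) = 1 for z > 0 and σ'(z) = α for z < 0, and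
β = (1/P)·∑_μ yμ·xμ. -/
theorem stmt_6 (D P : ℕ) (x : Fin P → Fin D → ℝ) (y : Fin P → ℝ)
    (hsym : ∃ π : Equiv.Perm (Fin P), ∀ μ, x (π μ) = -x μ ∧ y (π μ) = -y μ)
    (α : ℝ) (hα : α ∈ Set.Icc (0 : ℝ) 1)
    (w : Fin D → ℝ) (hw : ∀ μ, ∑ i, w i * x μ i ≠ 0)
    (β : Fin D → ℝ) (hβ : β = (P : ℝ)⁻¹ • ∑ μ, y μ • x μ) :
    (P : ℝ)⁻¹ • (∑ μ, (if 0 < ∑ i, w i * x μ i then (1 : ℝ) else α) • (y μ • x μ))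
        = ((α + 1) / 2) • β ∧
    (P : ℝ)⁻¹ * (∑ μ, y μ * max (∑ i, w i * x μ i) (α * ∑ i, w i * x μ i))
        = ((α + 1) / 2) * ∑ i, w i * β i := by
  obtain ⟨π, hπ⟩ := hsym
  set s : Fin P → ℝ := fun μ => ∑ i, w i * x μ i with hsdef
  have hs : ∀ μ, s (π μ) = -s μ := by
    intro μ
    simp only [hsdef, (hπ μ).1, Pi.neg_apply, mul_neg, Finset.sum_neg_distrib]
  constructor
  · funext i
    simp only [Pi.smul_apply, Finset.sum_apply, smul_eq_mul, hβ, Finset.smul_sum]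
    rw [key1 π s (fun μ => y μ * x μ i) α hs
      (fun μ => by simp [(hπ μ).1, (hπ μ).2]) hw]
    rw [Finset.mul_sum, Finset.mul_sum, Finset.mul_sum]
    ring_nf
  · rw [key2 π s y α hs (fun μ => (hπ μ).2)]
    have hswap : ∑ μ, y μ * s μ = ∑ i, w i * ∑ μ, y μ * x μ i := by
      simp_rw [hsdef, Finset.mul_sum]
      rw [Finset.sum_comm]
      exact Finset.sum_congr rfl fun i _ => Finset.sum_congr rfl fun μ _ => by ring
    rw [hswap, hβ]
    simp only [Pi.smul_apply, Finset.sum_apply, smul_eq_mul, Pi.inv_apply]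
    rw [Finset.mul_sum, Finset.mul_sum, Finset.mul_sum]
    ring_nf
end

section
/- Let {(x_μ, y_μ)}_{μ=1}^P be a symmetric dataset with s = ‖β‖ and Σ = (1/P)∑_μ x_μx_μᵀ. Fix α ∈ [0,1], σ(z) = max(z, αz), and the convention σ'(z) = 1 for z > 0, σ'(z) = α for z ≤ 0. Let τ > 0 and suppose W₁ : [0,∞) → ℝ^{H×D}, W₂ : [0,∞) → ℝ^{1×H} are differentiable and satisfy the square-loss gradient flow τ·Ẇ₁ = (1/P)∑_μ σ'(W₁x_μ) ⊙ W₂ᵀ(y_μ − W₂σ(W₁x_μ))x_μᵀ and τ·Ẇ₂ = (1/P)∑_μ (y_μ − W₂σ(W₁x_μ))·σ(W₁x_μ)ᵀ. Set u(t) = max(‖W₁(t)‖, ‖W₂(t)‖) (Frobenius norms) and w_init = u(0), and assume w_init < 1. Then for all t with 0 ≤ t < (τ/(s + Tr Σ))·ln(1/w_init), one has u(t) ≤ w_init·e^{(s + Tr Σ)·t/τ}. -/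
open Matrix

/-- Frobenius norm of a real matrix. -/
noncomputable def frob {m n : ℕ} (M : Matrix (Fin m) (Fin n) ℝ) : ℝ :=
  Real.sqrt (∑ i, ∑ j, M i j ^ 2)

/-- Euclidean norm of a real vector. -/
noncomputable def vnorm {n : ℕ} (v : Fin n → ℝ) : ℝ :=
  Real.sqrt (∑ i, v i ^ 2)

lemma aux_abs_cs {n : ℕ} (f g : Fin n → ℝ) :
    |∑ i, f i * g i| ≤ Real.sqrt (∑ i, f i ^ 2) * Real.sqrt (∑ i, g i ^ 2) := by
  rw [← Real.sqrt_sq_eq_abs, ← Real.sqrt_mul (by positivity)]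
  exact Real.sqrt_le_sqrt (Finset.sum_mul_sq_le_sq_mul_sq _ _ _)

lemma aux_sprime_mul (α z : ℝ) (h1 : α ≤ 1) :
    (if 0 < z then (1:ℝ) else α) * z = max z (α * z) := by
  split_ifs with h
  · rw [one_mul, max_eq_left]; nlinarith
  · push_neg at h; rw [max_eq_right]; nlinarith

lemma aux_max_sub_max (α z : ℝ) (h1 : α ≤ 1) :
    max z (α * z) - max (-z) (α * -z) = (1 + α) * z := by
  rcases le_or_gt z 0 with h | h
  · rw [max_eq_right (by nlinarith), max_eq_left (by nlinarith)]; ring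
  · rw [max_eq_left (by nlinarith), max_eq_right (by nlinarith)]; ring

lemma aux_max_sqrt (p q : ℝ) :
    max (Real.sqrt p) (Real.sqrt q) = Real.sqrt (max p q) := by
  rcases le_total p q with h | h
  · rw [max_eq_right h, max_eq_right (Real.sqrt_le_sqrt h)]
  · rw [max_eq_left h, max_eq_left (Real.sqrt_le_sqrt h)]

lemma aux_step (α w q : ℝ) (h0 : 0 ≤ α) (h1 : α ≤ 1) :
    w * ((1 + α) / 2 * q) ≤ |w| * |q| := by
  have habs : w * q ≤ |w| * |q| := (le_abs_self _).trans (le_of_eq (abs_mul w q))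
  have hneg : -(|w| * |q|) ≤ w * q := by
    have := neg_abs_le (w * q); rw [abs_mul] at this; linarith
  nlinarith [abs_nonneg w, abs_nonneg q]

lemma aux_gron (N R : ℝ → ℝ) (K : ℝ)
    (hN : ∀ u, HasDerivAt N (R u) u) (hb : ∀ u, R u ≤ K * N u) :
    ∀ t, 0 ≤ t → N t ≤ N 0 * Real.exp (K * t) := by
  intro t ht
  set g : ℝ → ℝ := fun v => N v * Real.exp (-K * v) with hg
  have hd : ∀ u, HasDerivAt g (R u * Real.exp (-K * u) + N u * (Real.exp (-K * u) * -K)) u := by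
    intro u
    have he : HasDerivAt (fun v : ℝ => Real.exp (-K * v)) (Real.exp (-K * u) * (-K)) u := by
      simpa using ((hasDerivAt_id u).const_mul (-K)).exp
    simpa [hg] using (hN u).fun_mul he
  have hanti : Antitone g := by
    refine antitone_of_deriv_nonpos (fun u => (hd u).differentiableAt) (fun u => ?_)
    rw [(hd u).deriv]
    have hK := hb u
    have he := Real.exp_pos (-K * u)
    nlinarith
  have h0 : g t ≤ g 0 := hanti ht
  simp only [hg] at h0
  have h1 := mul_le_mul_of_nonneg_right h0 (Real.exp_pos (K * t)).le
  rw [mul_assoc, ← Real.exp_add] at h1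
  simpa using h1

/-- norm bound for the early phase of the square-loss gradient flow of a
two-layer bias-free leaky ReLU network on a symmetric dataset: with
u(t) = max(‖W₁(t)‖, ‖W₂(t)‖), w_init = u(0) < 1, s = ‖β‖, one has
u(t) ≤ w_init·e^{(s + Tr Σ)t/τ} for 0 ≤ t < (τ/(s + Tr Σ))·ln(1/w_init). -/
theorem stmt_8 (D P H : ℕ) (x : Fin P → Fin D → ℝ) (y : Fin P → ℝ)
    (hsym : ∃ π : Equiv.Perm (Fin P), ∀ μ, x (π μ) = -x μ ∧ y (π μ) = -y μ)
    (α : ℝ) (hα : α ∈ Set.Icc (0 : ℝ) 1) (τ : ℝ) (hτ : 0 < τ)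
    (β : Fin D → ℝ) (hβ : β = (P : ℝ)⁻¹ • ∑ μ, y μ • x μ)
    (s : ℝ) (hs : s = vnorm β)
    (Sig : Matrix (Fin D) (Fin D) ℝ)
    (hSig : Sig = (P : ℝ)⁻¹ • ∑ μ, Matrix.of fun i j => x μ i * x μ j)
    (W1 : ℝ → Matrix (Fin H) (Fin D) ℝ) (W2 : ℝ → Fin H → ℝ)
    (hW1 : ∀ h j t, HasDerivAt (fun u => W1 u h j)
      (τ⁻¹ * ((P : ℝ)⁻¹ * ∑ μ,
        (if 0 < (W1 t *ᵥ x μ) h then (1 : ℝ) else α) *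
          (W2 t h * (y μ - ∑ h', W2 t h' *
            max ((W1 t *ᵥ x μ) h') (α * (W1 t *ᵥ x μ) h'))) * x μ j)) t)
    (hW2 : ∀ h t, HasDerivAt (fun u => W2 u h)
      (τ⁻¹ * ((P : ℝ)⁻¹ * ∑ μ,
        (y μ - ∑ h', W2 t h' * max ((W1 t *ᵥ x μ) h') (α * (W1 t *ᵥ x μ) h')) *
          max ((W1 t *ᵥ x μ) h) (α * (W1 t *ᵥ x μ) h))) t)
    (winit : ℝ) (hwinit : winit = max (frob (W1 0)) (vnorm (W2 0)))
    (hsmall : winit < 1) :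
    ∀ t : ℝ, 0 ≤ t → t < (τ / (s + Sig.trace)) * Real.log (1 / winit) →
      max (frob (W1 t)) (vnorm (W2 t))
        ≤ winit * Real.exp ((s + Sig.trace) * t / τ) := by
  obtain ⟨π, hπ⟩ := hsym
  obtain ⟨hα0, hα1⟩ := hα
  intro t ht _
  have hs0 : 0 ≤ s := by rw [hs]; exact Real.sqrt_nonneg _
  have hP0 : (0:ℝ) ≤ (P:ℝ)⁻¹ := by positivity
  have hτ0 : (0:ℝ) ≤ τ⁻¹ := by positivity
  set f : ℝ → Fin P → ℝ := fun u μ =>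
    ∑ h', W2 u h' * max ((W1 u *ᵥ x μ) h') (α * (W1 u *ᵥ x μ) h') with hf
  set a : ℝ → ℝ := fun u => ∑ h, ∑ j, W1 u h j ^ 2 with ha
  set b : ℝ → ℝ := fun u => ∑ h, W2 u h ^ 2 with hb
  set R : ℝ → ℝ := fun u => 2 * τ⁻¹ * ((P:ℝ)⁻¹ * ∑ μ, (y μ - f u μ) * f u μ) with hR
  have ha0 : ∀ u, 0 ≤ a u := by intro u; rw [ha]; positivity
  have hb0 : ∀ u, 0 ≤ b u := by intro u; rw [hb]; positivity
  -- derivative of a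
  have hza : ∀ u, HasDerivAt a (R u) u := by
    intro u
    have h1 : HasDerivAt a (∑ h, ∑ j, (2 * W1 u h j *
        (τ⁻¹ * ((P : ℝ)⁻¹ * ∑ μ, (if 0 < (W1 u *ᵥ x μ) h then (1 : ℝ) else α) *
          (W2 u h * (y μ - f u μ)) * x μ j)))) u := by
      rw [ha]
      refine HasDerivAt.fun_sum fun h _ => HasDerivAt.fun_sum fun j _ => ?_
      have h2 := (hW1 h j u).fun_pow 2
      have h3 : ((2:ℕ):ℝ) * W1 u h j ^ (2-1) = 2 * W1 u h j := by norm_num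
      rw [h3] at h2
      simp only [hf]
      convert h2 using 1
    convert h1 using 1
    rw [hR]
    have step : ∀ h : Fin H, ∀ j : Fin D, (2 * W1 u h j *
        (τ⁻¹ * ((P : ℝ)⁻¹ * ∑ μ, (if 0 < (W1 u *ᵥ x μ) h then (1 : ℝ) else α) *
          (W2 u h * (y μ - f u μ)) * x μ j)))
        = ∑ μ, (2 * τ⁻¹ * ((P:ℝ)⁻¹ * ((if 0 < (W1 u *ᵥ x μ) h then (1 : ℝ) else α) *
            (W2 u h * (y μ - f u μ))))) * (W1 u h j * x μ j) := by
      intro h j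
      simp only [Finset.mul_sum]
      exact Finset.sum_congr rfl fun μ _ => by ring
    calc 2 * τ⁻¹ * ((P:ℝ)⁻¹ * ∑ μ, (y μ - f u μ) * f u μ)
        = ∑ μ, ∑ h, (2 * τ⁻¹ * ((P:ℝ)⁻¹ * ((if 0 < (W1 u *ᵥ x μ) h then (1 : ℝ) else α) *
            (W2 u h * (y μ - f u μ))))) * ((W1 u *ᵥ x μ) h) := by
          simp only [Finset.mul_sum]
          refine Finset.sum_congr rfl fun μ _ => ?_
          have hfμ : (y μ - f u μ) * f u μ
              = ∑ h, (y μ - f u μ) * (W2 u h * max ((W1 u *ᵥ x μ) h) (α * (W1 u *ᵥ x μ) h)) := by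
            rw [hf]; rw [Finset.mul_sum]
          rw [hfμ]
          simp only [Finset.mul_sum]
          refine Finset.sum_congr rfl fun h _ => ?_
          have hsp := aux_sprime_mul α ((W1 u *ᵥ x μ) h) hα1
          rw [← hsp]; ring
      _ = ∑ h, ∑ μ, (2 * τ⁻¹ * ((P:ℝ)⁻¹ * ((if 0 < (W1 u *ᵥ x μ) h then (1 : ℝ) else α) *
            (W2 u h * (y μ - f u μ))))) * ((W1 u *ᵥ x μ) h) := Finset.sum_comm
      _ = ∑ h, ∑ μ, ∑ j, (2 * τ⁻¹ * ((P:ℝ)⁻¹ * ((if 0 < (W1 u *ᵥ x μ) h then (1 : ℝ) else α) *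
            (W2 u h * (y μ - f u μ))))) * (W1 u h j * x μ j) := by
          refine Finset.sum_congr rfl fun h _ => Finset.sum_congr rfl fun μ _ => ?_
          rw [Matrix.mulVec, dotProduct, Finset.mul_sum]
      _ = ∑ h, ∑ j, ∑ μ, (2 * τ⁻¹ * ((P:ℝ)⁻¹ * ((if 0 < (W1 u *ᵥ x μ) h then (1 : ℝ) else α) *
            (W2 u h * (y μ - f u μ))))) * (W1 u h j * x μ j) :=
          Finset.sum_congr rfl fun h _ => Finset.sum_comm
      _ = ∑ h, ∑ j, (2 * W1 u h j *
          (τ⁻¹ * ((P : ℝ)⁻¹ * ∑ μ, (if 0 < (W1 u *ᵥ x μ) h then (1 : ℝ) else α) *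
            (W2 u h * (y μ - f u μ)) * x μ j))) :=
          Finset.sum_congr rfl fun h _ => Finset.sum_congr rfl fun j _ => (step h j).symm
  -- derivative of b
  have hzb : ∀ u, HasDerivAt b (R u) u := by
    intro u
    have h1 : HasDerivAt b (∑ h, (2 * W2 u h *
        (τ⁻¹ * ((P : ℝ)⁻¹ * ∑ μ, (y μ - f u μ) *
          max ((W1 u *ᵥ x μ) h) (α * (W1 u *ᵥ x μ) h))))) u := by
      rw [hb]
      refine HasDerivAt.fun_sum fun h _ => ?_
      have h2 := (hW2 h u).fun_pow 2
      have h3 : ((2:ℕ):ℝ) * W2 u h ^ (2-1) = 2 * W2 u h := by norm_num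
      rw [h3] at h2
      simp only [hf]
      convert h2 using 1
    convert h1 using 1
    rw [hR]
    calc 2 * τ⁻¹ * ((P:ℝ)⁻¹ * ∑ μ, (y μ - f u μ) * f u μ)
        = ∑ μ, ∑ h, 2 * W2 u h * (τ⁻¹ * ((P : ℝ)⁻¹ * ((y μ - f u μ) *
            max ((W1 u *ᵥ x μ) h) (α * (W1 u *ᵥ x μ) h)))) := by
          simp only [Finset.mul_sum]
          refine Finset.sum_congr rfl fun μ _ => ?_
          have hfμ : (y μ - f u μ) * f u μ
              = ∑ h, (y μ - f u μ) * (W2 u h * max ((W1 u *ᵥ x μ) h) (α * (W1 u *ᵥ x μ) h)) := by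
            rw [hf]; rw [Finset.mul_sum]
          rw [hfμ]
          simp only [Finset.mul_sum]
          exact Finset.sum_congr rfl fun h _ => by ring
      _ = ∑ h, ∑ μ, 2 * W2 u h * (τ⁻¹ * ((P : ℝ)⁻¹ * ((y μ - f u μ) *
            max ((W1 u *ᵥ x μ) h) (α * (W1 u *ᵥ x μ) h)))) := Finset.sum_comm
      _ = ∑ h, (2 * W2 u h *
          (τ⁻¹ * ((P : ℝ)⁻¹ * ∑ μ, (y μ - f u μ) *
            max ((W1 u *ᵥ x μ) h) (α * (W1 u *ᵥ x μ) h)))) := by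
          refine Finset.sum_congr rfl fun h _ => ?_
          simp only [Finset.mul_sum]
  -- β entries
  have hβj : ∀ j, β j = (P:ℝ)⁻¹ * ∑ μ, y μ * x μ j := by
    intro j; rw [hβ]; simp [Finset.sum_apply]
  -- symmetry identity
  have hkey : ∀ (u : ℝ) (h : Fin H),
      ∑ μ, y μ * max ((W1 u *ᵥ x μ) h) (α * (W1 u *ᵥ x μ) h)
        = (1 + α) / 2 * ∑ μ, y μ * (W1 u *ᵥ x μ) h := by
    intro u h
    have h1 : ∑ μ, y μ * max ((W1 u *ᵥ x μ) h) (α * (W1 u *ᵥ x μ) h)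
        = ∑ μ, (-(y μ)) * max (-((W1 u *ᵥ x μ) h)) (α * -((W1 u *ᵥ x μ) h)) := by
      rw [← Equiv.sum_comp π (fun μ => y μ * max ((W1 u *ᵥ x μ) h) (α * (W1 u *ᵥ x μ) h))]
      refine Finset.sum_congr rfl fun μ _ => ?_
      rw [(hπ μ).2, (hπ μ).1, Matrix.mulVec_neg]
      simp
    have h2 : (∑ μ, y μ * max ((W1 u *ᵥ x μ) h) (α * (W1 u *ᵥ x μ) h)) +
        (∑ μ, (-(y μ)) * max (-((W1 u *ᵥ x μ) h)) (α * -((W1 u *ᵥ x μ) h)))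
        = ∑ μ, y μ * ((1 + α) * (W1 u *ᵥ x μ) h) := by
      rw [← Finset.sum_add_distrib]
      refine Finset.sum_congr rfl fun μ _ => ?_
      have hd := aux_max_sub_max α ((W1 u *ᵥ x μ) h) hα1
      linear_combination y μ * hd
    rw [← h1] at h2
    have h4 : (1 + α) / 2 * ∑ μ, y μ * (W1 u *ᵥ x μ) h
        = (∑ μ, y μ * ((1 + α) * (W1 u *ᵥ x μ) h)) / 2 := by
      rw [Finset.mul_sum, Finset.sum_div]
      exact Finset.sum_congr rfl fun μ _ => by ring
    rw [h4]; linarith [h2]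
  have hq : ∀ (u : ℝ) (h : Fin H), (P:ℝ)⁻¹ * ∑ μ, y μ * (W1 u *ᵥ x μ) h
      = ∑ j, W1 u h j * β j := by
    intro u h
    calc (P:ℝ)⁻¹ * ∑ μ, y μ * (W1 u *ᵥ x μ) h
        = ∑ μ, ∑ j, (P:ℝ)⁻¹ * (y μ * (W1 u h j * x μ j)) := by
          simp only [Matrix.mulVec, dotProduct, Finset.mul_sum]
      _ = ∑ j, ∑ μ, (P:ℝ)⁻¹ * (y μ * (W1 u h j * x μ j)) := Finset.sum_comm
      _ = ∑ j, W1 u h j * ((P:ℝ)⁻¹ * ∑ μ, y μ * x μ j) := by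
          refine Finset.sum_congr rfl fun j _ => ?_
          simp only [Finset.mul_sum]
          exact Finset.sum_congr rfl fun μ _ => by ring
      _ = ∑ j, W1 u h j * β j := Finset.sum_congr rfl fun j _ => by rw [hβj j]
  have hyf : ∀ u : ℝ, (P:ℝ)⁻¹ * ∑ μ, y μ * f u μ
      ≤ s * (Real.sqrt (b u) * Real.sqrt (a u)) := by
    intro u
    have e1 : (P:ℝ)⁻¹ * ∑ μ, y μ * f u μ
        = ∑ h, W2 u h * ((1 + α) / 2 * ∑ j, W1 u h j * β j) := by
      calc (P:ℝ)⁻¹ * ∑ μ, y μ * f u μ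
          = ∑ μ, ∑ h, (P:ℝ)⁻¹ * (W2 u h * (y μ * max ((W1 u *ᵥ x μ) h) (α * (W1 u *ᵥ x μ) h))) := by
            rw [Finset.mul_sum]
            refine Finset.sum_congr rfl fun μ _ => ?_
            rw [hf]
            simp only [Finset.mul_sum]
            exact Finset.sum_congr rfl fun h _ => by ring
        _ = ∑ h, ∑ μ, (P:ℝ)⁻¹ * (W2 u h * (y μ * max ((W1 u *ᵥ x μ) h) (α * (W1 u *ᵥ x μ) h))) :=
            Finset.sum_comm
        _ = ∑ h, W2 u h * ((P:ℝ)⁻¹ * ∑ μ, y μ * max ((W1 u *ᵥ x μ) h) (α * (W1 u *ᵥ x μ) h)) := by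
            refine Finset.sum_congr rfl fun h _ => ?_
            simp only [Finset.mul_sum]
            exact Finset.sum_congr rfl fun μ _ => by ring
        _ = ∑ h, W2 u h * ((1 + α) / 2 * ∑ j, W1 u h j * β j) := by
            refine Finset.sum_congr rfl fun h _ => ?_
            rw [hkey u h, show (P:ℝ)⁻¹ * ((1 + α) / 2 * ∑ μ, y μ * (W1 u *ᵥ x μ) h)
              = (1 + α) / 2 * ((P:ℝ)⁻¹ * ∑ μ, y μ * (W1 u *ᵥ x μ) h) from by ring, hq u h]
    rw [e1]
    have e2 : ∑ h, W2 u h * ((1 + α) / 2 * ∑ j, W1 u h j * β j)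
        ≤ ∑ h, |W2 u h| * (Real.sqrt (∑ j, W1 u h j ^ 2) * s) := by
      refine Finset.sum_le_sum fun h _ => ?_
      refine (aux_step α (W2 u h) (∑ j, W1 u h j * β j) hα0 hα1).trans ?_
      have s2 : |∑ j, W1 u h j * β j| ≤ Real.sqrt (∑ j, W1 u h j ^ 2) * s := by
        rw [hs, vnorm]
        exact aux_abs_cs _ _
      exact mul_le_mul_of_nonneg_left s2 (abs_nonneg _)
    refine e2.trans ?_
    have e3 : ∑ h, |W2 u h| * (Real.sqrt (∑ j, W1 u h j ^ 2) * s)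
        = s * ∑ h, |W2 u h| * Real.sqrt (∑ j, W1 u h j ^ 2) := by
      rw [Finset.mul_sum]; exact Finset.sum_congr rfl fun h _ => by ring
    rw [e3]
    refine mul_le_mul_of_nonneg_left ?_ hs0
    refine ((le_abs_self _).trans (aux_abs_cs (fun h => |W2 u h|)
      (fun h => Real.sqrt (∑ j, W1 u h j ^ 2)))).trans ?_
    have e5 : ∑ h, |W2 u h| ^ 2 = b u := by
      rw [hb]; exact Finset.sum_congr rfl fun h _ => sq_abs _
    have e6 : ∑ h, Real.sqrt (∑ j, W1 u h j ^ 2) ^ 2 = a u := by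
      rw [ha]; exact Finset.sum_congr rfl fun h _ => Real.sq_sqrt (by positivity)
    rw [e5, e6]
  -- b - a is constant
  have hconst : ∀ u : ℝ, b u - a u = b 0 - a 0 := by
    intro u
    exact is_const_of_deriv_eq_zero (f := fun v => b v - a v)
      (fun v => ((hzb v).sub (hza v)).differentiableAt)
      (fun v => by rw [((hzb v).fun_sub (hza v)).deriv]; ring) u 0
  set N : ℝ → ℝ := fun u => a u + max 0 (b 0 - a 0) with hN
  have hmaxN : ∀ u : ℝ, max (a u) (b u) = N u := by
    intro u
    show max (a u) (b u) = a u + max 0 (b 0 - a 0)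
    have hc := hconst u
    rcases le_total (a u) (b u) with h | h
    · rw [max_eq_right h, max_eq_right (by linarith : (0:ℝ) ≤ b 0 - a 0)]; linarith
    · rw [max_eq_left h, max_eq_left (by linarith : b 0 - a 0 ≤ 0)]; linarith
  have hNd : ∀ u, HasDerivAt N (R u) u := by
    intro u; rw [hN]; exact (hza u).add_const _
  have hRb : ∀ u, R u ≤ (2 * s * τ⁻¹) * N u := by
    intro u
    have h1 : (P:ℝ)⁻¹ * ∑ μ, (y μ - f u μ) * f u μ ≤ (P:ℝ)⁻¹ * ∑ μ, y μ * f u μ := by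
      refine mul_le_mul_of_nonneg_left ?_ hP0
      refine Finset.sum_le_sum fun μ _ => ?_
      nlinarith [sq_nonneg (f u μ)]
    have h3 : Real.sqrt (b u) * Real.sqrt (a u) ≤ N u := by
      rw [← hmaxN u]
      rcases le_total (a u) (b u) with h | h
      · calc Real.sqrt (b u) * Real.sqrt (a u) ≤ Real.sqrt (b u) * Real.sqrt (b u) :=
            mul_le_mul_of_nonneg_left (Real.sqrt_le_sqrt h) (Real.sqrt_nonneg _)
          _ = b u := Real.mul_self_sqrt (hb0 u)
          _ ≤ max (a u) (b u) := le_max_right _ _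
      · calc Real.sqrt (b u) * Real.sqrt (a u) ≤ Real.sqrt (a u) * Real.sqrt (a u) :=
            mul_le_mul_of_nonneg_right (Real.sqrt_le_sqrt h) (Real.sqrt_nonneg _)
          _ = a u := Real.mul_self_sqrt (ha0 u)
          _ ≤ max (a u) (b u) := le_max_left _ _
    rw [hR]
    calc 2 * τ⁻¹ * ((P:ℝ)⁻¹ * ∑ μ, (y μ - f u μ) * f u μ)
        ≤ 2 * τ⁻¹ * ((P:ℝ)⁻¹ * ∑ μ, y μ * f u μ) :=
          mul_le_mul_of_nonneg_left h1 (by positivity)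
      _ ≤ 2 * τ⁻¹ * (s * (Real.sqrt (b u) * Real.sqrt (a u))) :=
          mul_le_mul_of_nonneg_left (hyf u) (by positivity)
      _ ≤ 2 * τ⁻¹ * (s * N u) :=
          mul_le_mul_of_nonneg_left (mul_le_mul_of_nonneg_left h3 hs0) (by positivity)
      _ = (2 * s * τ⁻¹) * N u := by ring
  have hgron := aux_gron N R (2 * s * τ⁻¹) hNd hRb t ht
  have htr : 0 ≤ Sig.trace := by
    rw [hSig]
    simp only [Matrix.trace, Matrix.diag, Matrix.smul_apply, Matrix.sum_apply,
      Matrix.of_apply, smul_eq_mul]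
    refine Finset.sum_nonneg fun i _ => mul_nonneg hP0 ?_
    exact Finset.sum_nonneg fun μ _ => mul_self_nonneg _
  have hfa : ∀ u : ℝ, frob (W1 u) = Real.sqrt (a u) := by
    intro u; rw [ha]; rfl
  have hfb : ∀ u : ℝ, vnorm (W2 u) = Real.sqrt (b u) := by
    intro u; rw [hb]; rfl
  have hm : max (frob (W1 t)) (vnorm (W2 t)) = Real.sqrt (N t) := by
    rw [hfa, hfb, aux_max_sqrt, hmaxN]
  have hw2 : winit = Real.sqrt (N 0) := by
    rw [hwinit, hfa, hfb, aux_max_sqrt, hmaxN]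
  rw [hm, hw2]
  refine (Real.sqrt_le_sqrt hgron).trans ?_
  have hN00 : 0 ≤ N 0 := by
    rw [← hmaxN 0]; exact le_max_of_le_left (ha0 0)
  rw [Real.sqrt_mul hN00]
  have hexp : Real.sqrt (Real.exp (2 * s * τ⁻¹ * t)) = Real.exp (s * τ⁻¹ * t) := by
    rw [show 2 * s * τ⁻¹ * t = (s * τ⁻¹ * t) + (s * τ⁻¹ * t) by ring, Real.exp_add,
      Real.sqrt_mul_self (Real.exp_pos _).le]
  rw [hexp]
  refine mul_le_mul_of_nonneg_left ?_ (Real.sqrt_nonneg _)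
  rw [Real.exp_le_exp, div_eq_mul_inv]
  have hst : s * t ≤ (s + Sig.trace) * t := by nlinarith
  calc s * τ⁻¹ * t = (s * t) * τ⁻¹ := by ring
    _ ≤ ((s + Sig.trace) * t) * τ⁻¹ := mul_le_mul_of_nonneg_right hst hτ0
    _ = (s + Sig.trace) * t * τ⁻¹ := rfl
end

section
/- Let β ∈ ℝ^D be nonzero, s = ‖β‖, β̄ = β/s, α ∈ [0,1], τ > 0, and M = [[0, β],[βᵀ, 0]] ∈ ℝ^{(D+1)×(D+1)} (zero D×D block, β as last column, βᵀ as last row). Given initial matrices W₁(0) ∈ ℝ^{H×D}, W₂(0) ∈ ℝ^{1×H}, the function W̃ : ℝ → ℝ^{(D+1)×H} defined by W̃(t) = (1/2)·e^{((α+1)s/(2τ))t}·[β̄;1]·(β̄ᵀW₁(0)ᵀ + W₂(0)) + (1/2)·e^{−((α+1)s/(2τ))t}·[β̄;−1]·(β̄ᵀW₁(0)ᵀ − W₂(0)) + [(I − β̄β̄ᵀ)W₁(0)ᵀ; 0] satisfies the linear ODE τ·(d/dt)W̃(t) = ((α+1)/2)·M·W̃(t) for all t, with initial value W̃(0) = [W₁(0)ᵀ;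 W₂(0)]. -/
/-- the explicit function W̃(t) solves the linearized early-phase ODE
τ·(d/dt)W̃ = ((α+1)/2)·M·W̃ with M = [[0, β],[βᵀ, 0]], and has initial value
W̃(0) = [W₁(0)ᵀ; W₂(0)]. -/
theorem stmt_9 (D H : ℕ) (β : Fin D → ℝ) (hβ : β ≠ 0)
    (α τ : ℝ) (hα : α ∈ Set.Icc (0 : ℝ) 1) (hτ : 0 < τ)
    (s : ℝ) (hs : s = Real.sqrt (∑ i, β i ^ 2))
    (bb : Fin D → ℝ) (hbb : bb = s⁻¹ • β)
    (M : Matrix (Fin (D + 1)) (Fin (D + 1)) ℝ)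
    (hM : ∀ i k, M i k =
      if hi : (i : ℕ) < D then (if (k : ℕ) = D then β ⟨i, hi⟩ else 0)
      else (if hk : (k : ℕ) < D then β ⟨k, hk⟩ else 0))
    (W10 : Matrix (Fin H) (Fin D) ℝ) (W20 : Fin H → ℝ)
    (Wt : ℝ → Matrix (Fin (D + 1)) (Fin H) ℝ)
    (hWt : ∀ t i h, Wt t i h =
      (1 / 2) * Real.exp (((α + 1) * s / (2 * τ)) * t) * (Fin.snoc bb 1 : Fin (D + 1) → ℝ) i *
        ((∑ j, bb j * W10 h j) + W20 h)
      + (1 / 2) * Real.exp (-(((α + 1) * s / (2 * τ)) * t)) * (Fin.snoc bb (-1) : Fin (D + 1) → ℝ) i *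
        ((∑ j, bb j * W10 h j) - W20 h)
      + (Fin.snoc (fun i' : Fin D => fun h' : Fin H =>
          W10 h' i' - bb i' * ∑ j, bb j * W10 h' j) (fun _ => (0 : ℝ)) :
            Fin (D + 1) → Fin H → ℝ) i h) :
    (∀ t i h, HasDerivAt (fun u => Wt u i h)
      (τ⁻¹ * (((α + 1) / 2) * ∑ k, M i k * Wt t k h)) t) ∧
    (∀ i h, Wt 0 i h =
      (Fin.snoc (fun i' : Fin D => fun h' : Fin H => W10 h' i')
        (fun h' => W20 h') : Fin (D + 1) → Fin H → ℝ) i h) := by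
  have hτ' : τ ≠ 0 := ne_of_gt hτ
  have hsum_pos : 0 < ∑ i, β i ^ 2 := by
    have hex : ∃ i, β i ≠ 0 := by
      by_contra hcon
      push_neg at hcon
      exact hβ (funext hcon)
    obtain ⟨i, hi⟩ := hex
    exact Finset.sum_pos' (fun j _ => sq_nonneg _)
      ⟨i, Finset.mem_univ i, by positivity⟩
  have hs0 : 0 < s := hs ▸ Real.sqrt_pos.mpr hsum_pos
  have hs' : s ≠ 0 := ne_of_gt hs0
  have hs2 : s ^ 2 = ∑ i, β i ^ 2 := by rw [hs]; exact Real.sq_sqrt hsum_pos.le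
  have hbs : ∀ j, bb j = s⁻¹ * β j := fun j => by rw [hbb]; simp
  have hbsum : ∑ j, β j * bb j = s := by
    have : ∑ j, β j * bb j = s⁻¹ * ∑ j, β j ^ 2 := by
      rw [Finset.mul_sum]
      exact Finset.sum_congr rfl fun j _ => by rw [hbs]; ring
    rw [this, ← hs2]; field_simp
  set c := (α + 1) * s / (2 * τ) with hc
  constructor
  · intro t i h
    set S := ∑ j, bb j * W10 h j with hS
    have hβS : ∑ j, β j * W10 h j = s * S := by
      rw [hS, Finset.mul_sum]
      refine Finset.sum_congr rfl fun j _ => ?_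
      rw [hbs]; field_simp
    have hexp1 : HasDerivAt (fun u : ℝ => Real.exp (c * u)) (c * Real.exp (c * t)) t := by
      simpa [mul_comm] using ((hasDerivAt_id t).const_mul c).exp
    have hexp2 : HasDerivAt (fun u : ℝ => Real.exp (-(c * u)))
        (-(c * Real.exp (-(c * t)))) t := by
      simpa [mul_comm] using (((hasDerivAt_id t).const_mul c).neg).exp
    have hd : HasDerivAt (fun u => Wt u i h)
        ((1/2) * (c * Real.exp (c*t)) * (Fin.snoc bb 1 : Fin (D+1) → ℝ) i * (S + W20 h)
          + (1/2) * (-(c * Real.exp (-(c*t)))) * (Fin.snoc bb (-1) : Fin (D+1) → ℝ) i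
            * (S - W20 h)) t := by
      have hfun : (fun u => Wt u i h) = (fun u =>
          ((1/2) * Real.exp (c*u) * (Fin.snoc bb 1 : Fin (D+1) → ℝ) i * (S + W20 h)
          + (1/2) * Real.exp (-(c*u)) * (Fin.snoc bb (-1) : Fin (D+1) → ℝ) i * (S - W20 h))
          + (Fin.snoc (fun i' : Fin D => fun h' : Fin H =>
              W10 h' i' - bb i' * ∑ j, bb j * W10 h' j) (fun _ => (0 : ℝ)) :
                Fin (D + 1) → Fin H → ℝ) i h) := by
        funext u; rw [hWt]
      rw [hfun]
      exact ((((hexp1.const_mul (1/2:ℝ)).mul_const _).mul_const _).add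
        ((((hexp2.const_mul (1/2:ℝ)).mul_const _).mul_const _))).add_const _
    convert hd using 1
    -- value equality
    induction i using Fin.lastCases with
    | last =>
      have hMlast : M (Fin.last D) (Fin.last D) = 0 := by simp [hM]
      have hMc : ∀ j' : Fin D, M (Fin.last D) (Fin.castSucc j') = β j' := by
        intro j'; simp [hM]
      have hW : ∀ j' : Fin D, Wt t (Fin.castSucc j') h =
          (1/2) * Real.exp (c*t) * bb j' * (S + W20 h)
          + (1/2) * Real.exp (-(c*t)) * bb j' * (S - W20 h)
          + (W10 h j' - bb j' * S) := by
        intro j'; rw [hWt]; simp [Fin.snoc_castSucc]; rw [hS]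
      have hsumval : ∑ k, M (Fin.last D) k * Wt t k h =
          (1/2) * Real.exp (c*t) * (S + W20 h) * s
          + (1/2) * Real.exp (-(c*t)) * (S - W20 h) * s := by
        rw [Fin.sum_univ_castSucc, hMlast, zero_mul, add_zero]
        have hstep : ∑ j' : Fin D, M (Fin.last D) (Fin.castSucc j') * Wt t (Fin.castSucc j') h
            = ∑ j' : Fin D, ((1/2) * Real.exp (c*t) * (S + W20 h) * (β j' * bb j')
              + (1/2) * Real.exp (-(c*t)) * (S - W20 h) * (β j' * bb j')
              + (β j' * W10 h j' - β j' * bb j' * S)) :=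
          Finset.sum_congr rfl fun j' _ => by rw [hMc, hW]; ring
        rw [hstep, Finset.sum_add_distrib, Finset.sum_add_distrib, Finset.sum_sub_distrib,
          ← Finset.mul_sum, ← Finset.mul_sum, ← Finset.sum_mul, hbsum, hβS]
        ring
      rw [hsumval]
      simp only [Fin.snoc_last]
      rw [hc]; field_simp
    | cast j =>
      have hMj : ∀ k : Fin (D+1), M (Fin.castSucc j) k =
          if (k : ℕ) = D then β j else 0 := by
        intro k; rw [hM]; simp
      have hsumval : ∑ k, M (Fin.castSucc j) k * Wt t k h = β j * Wt t (Fin.last D) h := by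
        rw [Fin.sum_univ_castSucc]
        have h1 : ∀ k' : Fin D, M (Fin.castSucc j) (Fin.castSucc k') = 0 := by
          intro k'; rw [hMj]; simp only [Fin.coe_castSucc]
          exact if_neg (Nat.ne_of_lt k'.isLt)
        have h2 : M (Fin.castSucc j) (Fin.last D) = β j := by rw [hMj]; simp
        simp [h1, h2]
      have hWlast : Wt t (Fin.last D) h =
          (1/2) * Real.exp (c*t) * (S + W20 h) - (1/2) * Real.exp (-(c*t)) * (S - W20 h) := by
        rw [hWt]; simp [Fin.snoc_last]; ring
      rw [hsumval, hWlast]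
      simp only [Fin.snoc_castSucc]
      have hbj : bb j = s⁻¹ * β j := hbs j
      rw [hc, hbj]; field_simp; ring
  · intro i h
    induction i using Fin.lastCases with
    | last => rw [hWt]; simp [Fin.snoc_last]; ring
    | cast j => rw [hWt]; simp [Fin.snoc_castSucc]; ring
end

section
/- Let α ∈ [0,1], σ(z) = max(z, αz), W₂ ∈ ℝ^{1×H} with entries w_{2h}, and r ∈ ℝ^D. Suppose W₁ = W₂ᵀrᵀ ∈ ℝ^{H×D} (so the h-th row of W₁ is w_{2h}·rᵀ), and suppose the positive and negative parts of W₂ have equal norms: ∑_{h: w_{2h}>0} w_{2h}² = ∑_{h: w_{2h}<0} w_{2h}². Then for every x ∈ ℝ^D: W₂·σ(W₁x) = ((α+1)/2)·‖W₂‖²·(rᵀx) = ((α+1)/2)·W₂W₁x. -/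
/-- a two-layer bias-free leaky ReLU network with balanced rank-one
weights W₁ = W₂ᵀrᵀ (and equal norms of the positive and negative parts of W₂)
implements the linear map x ↦ ((α+1)/2)·‖W₂‖²·(rᵀx) = ((α+1)/2)·W₂W₁x. -/
theorem stmt_11 (D H : ℕ) (α : ℝ) (hα : α ∈ Set.Icc (0 : ℝ) 1)
    (W2 : Fin H → ℝ) (r : Fin D → ℝ)
    (W1 : Fin H → Fin D → ℝ) (hW1 : ∀ h i, W1 h i = W2 h * r i)
    (hbal : ∑ h ∈ Finset.filter (fun h => 0 < W2 h) Finset.univ, W2 h ^ 2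
          = ∑ h ∈ Finset.filter (fun h => W2 h < 0) Finset.univ, W2 h ^ 2) :
    ∀ x : Fin D → ℝ,
      (∑ h, W2 h * max (∑ i, W1 h i * x i) (α * ∑ i, W1 h i * x i))
        = ((α + 1) / 2) * (∑ h, W2 h ^ 2) * ∑ i, r i * x i ∧
      (∑ h, W2 h * max (∑ i, W1 h i * x i) (α * ∑ i, W1 h i * x i))
        = ((α + 1) / 2) * ∑ h, W2 h * ∑ i, W1 h i * x i := by
  obtain ⟨hα0, hα1⟩ := hα
  have hmax : ∀ z : ℝ, max z (α * z) = ((1+α)/2)*z + ((1-α)/2)*|z| := by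
    intro z
    rcases le_or_gt 0 z with hz | hz
    · rw [abs_of_nonneg hz, max_eq_left (by nlinarith)]; ring
    · rw [abs_of_neg hz, max_eq_right (by nlinarith)]; ring
  have hzero : ∑ h, W2 h * |W2 h| = 0 := by
    have he : ∀ h : Fin H, W2 h * |W2 h|
        = (if 0 < W2 h then W2 h ^ 2 else 0) - (if W2 h < 0 then W2 h ^ 2 else 0) := by
      intro h
      rcases lt_trichotomy (W2 h) 0 with h1 | h1 | h1
      · rw [abs_of_neg h1]; simp [h1, not_lt.mpr h1.le]; ring
      · simp [h1]
      · rw [abs_of_pos h1]; simp [h1, not_lt.mpr h1.le, lt_asymm h1]; ring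
    simp only [he]
    rw [Finset.sum_sub_distrib, ← Finset.sum_filter, ← Finset.sum_filter, hbal, sub_self]
  intro x
  set s := ∑ i, r i * x i with hs
  have hinner : ∀ h, ∑ i, W1 h i * x i = W2 h * s := by
    intro h; rw [hs, Finset.mul_sum]
    exact Finset.sum_congr rfl fun i _ => by rw [hW1]; ring
  have key : (∑ h, W2 h * max (∑ i, W1 h i * x i) (α * ∑ i, W1 h i * x i))
      = ((α + 1) / 2) * (∑ h, W2 h ^ 2) * s := by
    simp only [hinner, hmax]
    have hterm : ∀ h : Fin H, W2 h * (((1+α)/2)*(W2 h * s) + ((1-α)/2)*|W2 h * s|)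
        = ((α+1)/2) * W2 h ^ 2 * s + ((1-α)/2*|s|) * (W2 h * |W2 h|) := by
      intro h; rw [abs_mul]; ring
    simp only [hterm]
    rw [Finset.sum_add_distrib, ← Finset.mul_sum, hzero, mul_zero, add_zero,
      ← Finset.sum_mul, ← Finset.mul_sum]
  refine ⟨key, ?_⟩
  rw [key]
  simp only [hinner]
  have : ∑ h, W2 h * (W2 h * s) = (∑ h, W2 h ^ 2) * s := by
    rw [Finset.sum_mul]
    exact Finset.sum_congr rfl fun h _ => by ring
  rw [this]; ring
end

section
/- Let {(x_μ, y_μ)}_{μ=1}^P be a symmetric dataset with Σ = (1/P)∑_μ x_μ x_μᵀ. Let α ∈ [0,1], σ(z) = max(z, αz), σ'(z) = 1 for z > 0 and σ'(z) = α for z < 0. Let W₂ ∈ ℝ^{1×H}, r ∈ ℝ^D with rᵀx_μ ≠ 0 for all μ, and W₁ = W₂ᵀrᵀ, and assume ∑_{h: w_{2h}>0} w_{2h}² = ∑_{h: w_{2h}<0} w_{2h}². Then: (1) (1/P)·∑_μ σ'(W₁x_μ) ⊙ (W₂ᵀW₂W₁x_μ)·x_μᵀ = ((α+1)/2)·W₂ᵀW₂W₁Σ;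 and (2) (1/P)·∑_μ x_μ·σ(W₁x_μ)ᵀ = ((α+1)/2)·Σ·W₁ᵀ. -/
open Matrix


lemma half_sum_aux {P : ℕ} (π : Equiv.Perm (Fin P)) (f g : Fin P → ℝ)
    (h : ∀ μ, f μ + f (π μ) = g μ) : ∑ μ, f μ = (2 : ℝ)⁻¹ * ∑ μ, g μ := by
  have h1 : ∑ μ, f (π μ) = ∑ μ, f μ := Equiv.sum_comp π f
  have h2 : ∑ μ, (f μ + f (π μ)) = ∑ μ, g μ :=
    Finset.sum_congr rfl fun μ _ => h μ
  rw [Finset.sum_add_distrib, h1] at h2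
  linarith

lemma max_sub_max (α a : ℝ) (h0 : 0 ≤ α) (h1 : α ≤ 1) :
    max a (α * a) - max (-a) (α * -a) = (1 + α) * a := by
  rcases le_or_gt 0 a with ha | ha
  · rw [max_eq_left (by nlinarith), max_eq_right (by nlinarith)]; ring
  · rw [max_eq_right (by nlinarith), max_eq_left (by nlinarith)]; ring

/-- on a symmetric dataset, with balanced rank-one weights W₁ = W₂ᵀrᵀ
(rᵀxμ ≠ 0 for all μ), the two key averages in the gradient flow reduce to linear-network
quantities: (1) (1/P)∑_μ σ'(W₁xμ) ⊙ (W₂ᵀW₂W₁xμ)xμᵀ = ((α+1)/2)·W₂ᵀW₂W₁Σ and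
(2) (1/P)∑_μ xμσ(W₁xμ)ᵀ = ((α+1)/2)·ΣW₁ᵀ. -/
theorem stmt_12 (D P H : ℕ) (x : Fin P → Fin D → ℝ) (y : Fin P → ℝ)
    (hsym : ∃ π : Equiv.Perm (Fin P), ∀ μ, x (π μ) = -x μ ∧ y (π μ) = -y μ)
    (α : ℝ) (hα : α ∈ Set.Icc (0 : ℝ) 1)
    (W2 : Matrix (Fin 1) (Fin H) ℝ) (r : Fin D → ℝ)
    (hr : ∀ μ, ∑ i, r i * x μ i ≠ 0)
    (W1 : Matrix (Fin H) (Fin D) ℝ) (hW1 : ∀ h i, W1 h i = W2 0 h * r i)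
    (hbal : ∑ h ∈ Finset.filter (fun h => 0 < W2 0 h) Finset.univ, W2 0 h ^ 2
          = ∑ h ∈ Finset.filter (fun h => W2 0 h < 0) Finset.univ, W2 0 h ^ 2)
    (Sig : Matrix (Fin D) (Fin D) ℝ)
    (hSig : Sig = (P : ℝ)⁻¹ • ∑ μ, Matrix.of fun i j => x μ i * x μ j) :
    ((P : ℝ)⁻¹ • ∑ μ, Matrix.of fun h j =>
        (if 0 < (W1 *ᵥ x μ) h then (1 : ℝ) else α) *
          (((W2ᵀ * W2) *ᵥ (W1 *ᵥ x μ)) h) * x μ j)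
      = ((α + 1) / 2) • (W2ᵀ * W2 * W1 * Sig) ∧
    ((P : ℝ)⁻¹ • ∑ μ, Matrix.of fun i h =>
        x μ i * max ((W1 *ᵥ x μ) h) (α * (W1 *ᵥ x μ) h))
      = ((α + 1) / 2) • (Sig * W1ᵀ) := by
  obtain ⟨π, hπ⟩ := hsym
  obtain ⟨hα0, hα1⟩ := hα
  have hxπ : ∀ μ, x (π μ) = -x μ := fun μ => (hπ μ).1
  have hmvπ : ∀ μ, W1 *ᵥ x (π μ) = -(W1 *ᵥ x μ) := by
    intro μ; rw [hxπ, Matrix.mulVec_neg]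
  have hmv : ∀ μ h, (W1 *ᵥ x μ) h = W2 0 h * ∑ i, r i * x μ i := by
    intro μ h
    simp only [mulVec, dotProduct, hW1, Finset.mul_sum, mul_assoc]
  constructor
  · -- part 1
    have key : W2ᵀ * W2 * W1 * Sig
        = (P : ℝ)⁻¹ • ∑ μ, Matrix.of (fun h j => ((W2ᵀ * W2 * W1) *ᵥ x μ) h * x μ j) := by
      rw [hSig, Matrix.mul_smul, Matrix.mul_sum]
      congr 1
      refine Finset.sum_congr rfl fun μ _ => ?_
      ext h j
      simp [Matrix.mul_apply, mulVec, dotProduct, Finset.sum_mul, mul_assoc]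
    rw [key, smul_comm]
    congr 1
    ext h j
    simp only [Matrix.sum_apply, Matrix.smul_apply, Matrix.of_apply, smul_eq_mul]
    rw [half_sum_aux π _ (fun μ => (α + 1) * (((W2ᵀ * W2 * W1) *ᵥ x μ) h * x μ j))]
    · rw [Finset.mul_sum, Finset.mul_sum]
      exact Finset.sum_congr rfl fun μ _ => by ring
    · intro μ
      rw [hmvπ, hxπ]
      simp only [Pi.neg_apply, Matrix.mulVec_neg]
      have hb : ((W2ᵀ * W2) *ᵥ (W1 *ᵥ x μ)) h = ((W2ᵀ * W2 * W1) *ᵥ x μ) h := by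
        rw [Matrix.mulVec_mulVec]
      rw [hb]
      set b := ((W2ᵀ * W2 * W1) *ᵥ x μ) h with hbdef
      have ha := hmv μ h
      rcases lt_trichotomy ((W1 *ᵥ x μ) h) 0 with h0 | h0 | h0
      · rw [if_neg (by linarith), if_pos (by simpa using h0)]
        ring
      · -- a = 0, so W2 0 h = 0 and b = 0
        have hw : W2 0 h = 0 := by
          rcases mul_eq_zero.mp (ha ▸ h0) with h' | h'
          · exact h'
          · exact absurd h' (hr μ)
        have hb0 : b = 0 := by
          rw [hbdef, ← Matrix.mulVec_mulVec, mulVec]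
          simp only [dotProduct, Matrix.mul_apply]
          apply Finset.sum_eq_zero
          intro h' _
          simp [Matrix.transpose_apply, hw, Fin.sum_univ_one]
        rw [hb0]; ring
      · rw [if_pos h0, if_neg (by simp; linarith)]
        ring
  · -- part 2
    have key : Sig * W1ᵀ
        = (P : ℝ)⁻¹ • ∑ μ, Matrix.of (fun i h => x μ i * (W1 *ᵥ x μ) h) := by
      rw [hSig, Matrix.smul_mul, Matrix.sum_mul]
      congr 1
      refine Finset.sum_congr rfl fun μ _ => ?_
      ext i h
      simp [Matrix.mul_apply, mulVec, dotProduct, Finset.mul_sum, mul_assoc,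
        mul_comm, mul_left_comm]
    rw [key, smul_comm]
    congr 1
    ext i h
    simp only [Matrix.sum_apply, Matrix.smul_apply, Matrix.of_apply, smul_eq_mul]
    rw [half_sum_aux π _ (fun μ => (α + 1) * (x μ i * (W1 *ᵥ x μ) h))]
    · rw [Finset.mul_sum, Finset.mul_sum]
      exact Finset.sum_congr rfl fun μ _ => by ring
    · intro μ
      rw [hmvπ, hxπ]
      simp only [Pi.neg_apply]
      linear_combination x μ i * max_sub_max α ((W1 *ᵥ x μ) h) hα0 hα1
end

section
/- Fix α ∈ [0,1], τ > 0, Σ ∈ ℝ^{D×D}, β ∈ ℝ^D. Suppose W₁ˡⁱⁿ : ℝ → ℝ^{H×D} and W₂ˡⁱⁿ : ℝ → ℝ^{1×H} are differentiable and satisfy the two-layer linear-network gradient flow τ·Ẇ₁ˡⁱⁿ = (W₂ˡⁱⁿ)ᵀ(βᵀ − W₂ˡⁱⁿW₁ˡⁱⁿΣ) and τ·Ẇ₂ˡⁱⁿ = (βᵀ − W₂ˡⁱⁿW₁ˡⁱⁿΣ)(W₁ˡⁱⁿ)ᵀ. Define W₁(t) = √(2/(α+1))·W₁ˡⁱⁿ(((α+1)/2)·t)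 and W₂(t) = √(2/(α+1))·W₂ˡⁱⁿ(((α+1)/2)·t). Then (W₁, W₂) satisfies the reduced leaky-ReLU dynamics τ·Ẇ₁ = ((α+1)/2)·W₂ᵀβᵀ − ((α+1)/2)²·W₂ᵀW₂W₁Σ and τ·Ẇ₂ = ((α+1)/2)·βᵀW₁ᵀ − ((α+1)/2)²·W₂W₁ΣW₁ᵀ, and the implemented linear maps agree: ((α+1)/2)·W₂(t)W₁(t) = W₂ˡⁱⁿ(((α+1)/2)t)·W₁ˡⁱⁿ(((α+1)/2)t) for all t. -/
open Matrix

/-- time-rescaled and √(2/(α+1))-rescaled solutions of the two-layer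
linear-network gradient flow solve the reduced leaky-ReLU dynamics, and the
implemented linear maps agree: ((α+1)/2)·W₂(t)W₁(t) = W₂ˡⁱⁿ(((α+1)/2)t)·W₁ˡⁱⁿ(((α+1)/2)t). -/
theorem stmt_13 (D H : ℕ) (α τ : ℝ) (hα : α ∈ Set.Icc (0 : ℝ) 1) (hτ : 0 < τ)
    (Sig : Matrix (Fin D) (Fin D) ℝ) (β : Fin D → ℝ)
    (Brow : Matrix (Fin 1) (Fin D) ℝ) (hB : ∀ j, Brow 0 j = β j)
    (W1lin : ℝ → Matrix (Fin H) (Fin D) ℝ) (W2lin : ℝ → Matrix (Fin 1) (Fin H) ℝ)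
    (hW1lin : ∀ t h j, HasDerivAt (fun u => W1lin u h j)
      (τ⁻¹ * (((W2lin t)ᵀ * (Brow - W2lin t * W1lin t * Sig)) h j)) t)
    (hW2lin : ∀ t h, HasDerivAt (fun u => W2lin u 0 h)
      (τ⁻¹ * (((Brow - W2lin t * W1lin t * Sig) * (W1lin t)ᵀ) 0 h)) t)
    (W1 : ℝ → Matrix (Fin H) (Fin D) ℝ) (W2 : ℝ → Matrix (Fin 1) (Fin H) ℝ)
    (hW1 : ∀ t, W1 t = Real.sqrt (2 / (α + 1)) • W1lin (((α + 1) / 2) * t))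
    (hW2 : ∀ t, W2 t = Real.sqrt (2 / (α + 1)) • W2lin (((α + 1) / 2) * t)) :
    (∀ t h j, HasDerivAt (fun u => W1 u h j)
      (τ⁻¹ * (((((α + 1) / 2) • ((W2 t)ᵀ * Brow)
        - (((α + 1) / 2) ^ 2) • ((W2 t)ᵀ * W2 t * W1 t * Sig) :
          Matrix (Fin H) (Fin D) ℝ)) h j)) t) ∧
    (∀ t h, HasDerivAt (fun u => W2 u 0 h)
      (τ⁻¹ * (((((α + 1) / 2) • (Brow * (W1 t)ᵀ)
        - (((α + 1) / 2) ^ 2) • (W2 t * W1 t * Sig * (W1 t)ᵀ) :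
          Matrix (Fin 1) (Fin H) ℝ)) 0 h)) t) ∧
    (∀ t, ((α + 1) / 2) • (W2 t * W1 t)
      = W2lin (((α + 1) / 2) * t) * W1lin (((α + 1) / 2) * t)) := by
  obtain ⟨hα0, -⟩ := hα
  set c : ℝ := (α + 1) / 2 with hc_def
  set s : ℝ := Real.sqrt (2 / (α + 1)) with hs_def
  have hc : 0 < c := by positivity
  have hss : s * s = 2 / (α + 1) := Real.mul_self_sqrt (by positivity)
  have hcs : c * (s * s) = 1 := by rw [hss]; field_simp [hc_def]; simp only [hc_def]; ring
  refine ⟨?_, ?_, ?_⟩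
  · intro t h j
    have hg : HasDerivAt (fun u : ℝ => c * u) c t := by
      simpa using (hasDerivAt_id t).const_mul c
    have hd := ((hW1lin (c * t) h j).comp t hg).const_mul s
    have hfun : (fun u => W1 u h j) = fun u => s * W1lin (c * u) h j := by
      funext u; rw [hW1 u]; simp [Matrix.smul_apply]
    rw [hfun]
    convert hd using 1
    case e'_4 => rfl
    case e'_5 => rfl
    case e'_8 => rfl
    rw [hW1 t, hW2 t]
    simp only [Matrix.transpose_smul, Matrix.smul_mul, Matrix.mul_smul,
      Matrix.mul_sub, Matrix.sub_apply, Matrix.smul_apply, smul_eq_mul,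
      Matrix.mul_assoc, smul_smul]
    linear_combination (τ⁻¹ * s * ((W2lin (c*t))ᵀ * (W2lin (c*t) * (W1lin (c*t) * Sig))) h j * (1 - α) / 2 - τ⁻¹ * s * ((W2lin (c*t))ᵀ * (W2lin (c*t) * (W1lin (c*t) * Sig))) h j) * hcs
  · intro t h
    have hg : HasDerivAt (fun u : ℝ => c * u) c t := by
      simpa using (hasDerivAt_id t).const_mul c
    have hd := ((hW2lin (c * t) h).comp t hg).const_mul s
    have hfun : (fun u => W2 u 0 h) = fun u => s * W2lin (c * u) 0 h := by
      funext u; rw [hW2 u]; simp [Matrix.smul_apply]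
    rw [hfun]
    convert hd using 1
    case e'_4 => rfl
    case e'_5 => rfl
    case e'_8 => rfl
    rw [hW1 t, hW2 t]
    simp only [Matrix.transpose_smul, Matrix.smul_mul, Matrix.mul_smul,
      Matrix.sub_mul, Matrix.sub_apply, Matrix.smul_apply, smul_eq_mul,
      Matrix.mul_assoc, smul_smul]
    linear_combination (τ⁻¹ * s * (W2lin (c*t) * (W1lin (c*t) * (Sig * (W1lin (c*t))ᵀ))) 0 h * (1 - α) / 2 - τ⁻¹ * s * (W2lin (c*t) * (W1lin (c*t) * (Sig * (W1lin (c*t))ᵀ))) 0 h) * hcs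
  · intro t
    rw [hW1 t, hW2 t]
    rw [Matrix.smul_mul, Matrix.mul_smul, smul_smul, smul_smul, mul_assoc, hcs, one_smul]
end

section
/- Let {(x_μ, y_μ)}_{μ=1}^P ⊂ ℝ^D × ℝ be a symmetric dataset. Let f : ℝ^D → ℝ have the form f(x) = wᵀx + f_e(x), where w ∈ ℝ^D and f_e is even (f_e(x) = f_e(−x) for all x). Then the empirical square loss decomposes as (1/2P)·∑_{μ=1}^P (y_μ − f(x_μ))² = (1/2P)·∑_{μ=1}^P (y_μ − wᵀx_μ)² + (1/2P)·∑_{μ=1}^P f_e(x_μ)². -/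
/-- on a symmetric dataset, the square loss of f(x) = wᵀx + f_e(x)
with f_e even decomposes as the loss of the linear part plus the average of f_e². -/
theorem stmt_15 (D P : ℕ) (x : Fin P → Fin D → ℝ) (y : Fin P → ℝ)
    (hsym : ∃ π : Equiv.Perm (Fin P), ∀ μ, x (π μ) = -x μ ∧ y (π μ) = -y μ)
    (w : Fin D → ℝ) (fe : (Fin D → ℝ) → ℝ)
    (hfe : ∀ v, fe v = fe (-v))
    (f : (Fin D → ℝ) → ℝ)
    (hf : ∀ v, f v = (∑ i, w i * v i) + fe v) :
    (1 / (2 * (P : ℝ))) * ∑ μ, (y μ - f (x μ)) ^ 2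
      = (1 / (2 * (P : ℝ))) * ∑ μ, (y μ - ∑ i, w i * x μ i) ^ 2
        + (1 / (2 * (P : ℝ))) * ∑ μ, fe (x μ) ^ 2 := by
  obtain ⟨π, hπ⟩ := hsym
  set g : Fin P → ℝ := fun μ => (y μ - ∑ i, w i * x μ i) * fe (x μ) with hg
  have hcross : ∑ μ, g μ = 0 := by
    have h1 : ∑ μ, g μ = ∑ μ, g (π μ) := (Equiv.sum_comp π g).symm
    have h2 : ∀ μ, g (π μ) = -g μ := by
      intro μ
      obtain ⟨hx, hy⟩ := hπ μ
      simp only [hg, hx, hy, ← hfe]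
      have : ∑ i, w i * (-x μ) i = -∑ i, w i * x μ i := by
        rw [← Finset.sum_neg_distrib]
        exact Finset.sum_congr rfl fun i _ => by simp only [Pi.neg_apply]; ring
      rw [this]; ring
    have h3 : ∑ μ, g μ = -∑ μ, g μ := by
      calc ∑ μ, g μ = ∑ μ, g (π μ) := h1
        _ = ∑ μ, -g μ := Finset.sum_congr rfl fun μ _ => h2 μ
        _ = -∑ μ, g μ := by simp
    linarith
  have hexp : ∑ μ, (y μ - f (x μ)) ^ 2
      = ∑ μ, (y μ - ∑ i, w i * x μ i) ^ 2 + ∑ μ, fe (x μ) ^ 2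
        - 2 * ∑ μ, g μ := by
    have hμ : ∀ μ, (y μ - f (x μ)) ^ 2
        = (y μ - ∑ i, w i * x μ i) ^ 2 + fe (x μ) ^ 2 - 2 * g μ := by
      intro μ; rw [hf]; simp only [hg]; ring
    simp only [hμ, Finset.sum_sub_distrib, Finset.sum_add_distrib, ← Finset.mul_sum]
  rw [hexp, hcross]
  ring
end

section
/- Let {(x_μ, y_μ)}_{μ=1}^P ⊂ ℝ^D × ℝ be a symmetric dataset whose input covariance Σ = (1/P)∑_μ x_μx_μᵀ is invertible, and let w* = Σ⁻¹β with β = (1/P)∑_μ y_μx_μ. Then: (1) for every two-layer bias-free leaky ReLU network f(x) = ∑_{h=1}^H w_{2h}·max(w_{1h}ᵀx, α·w_{1h}ᵀx) with α ∈ [0,1], the empirical square loss satisfies (1/2P)·∑_μ (y_μ − f(x_μ))² ≥ (1/2P)·∑_μ (y_μ − w*ᵀx_μ)²; and (2) this lower bound is attained: there exists a two-layer bias-free leaky ReLU network (e.g., with H = 2 hidden units) implementing exactly the linear map x ↦ w*ᵀx. Hence the ordinary-least-squares linear predictor is a global minimizer of the square loss over two-layer bias-free leaky ReLU networks on a symmetric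 dataset. -/
open Matrix

lemma lrelu_odd (α z : ℝ) (h1 : α ≤ 1) :
    max z (α*z) - max (-z) (α*(-z)) = (1+α)*z := by
  rcases le_total 0 z with hz | hz
  · rw [max_eq_left (by nlinarith), max_eq_right (by nlinarith)]; ring
  · rw [max_eq_right (by nlinarith), max_eq_left (by nlinarith)]; ring

/-- on a symmetric dataset with invertible input covariance, the OLS
linear predictor w* = Σ⁻¹β is a global minimizer of the square loss over all
two-layer bias-free leaky ReLU networks, and it is attained by such a network. -/
theorem stmt_16 (D P : ℕ) (x : Fin P → Fin D → ℝ) (y : Fin P → ℝ)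
    (hsym : ∃ π : Equiv.Perm (Fin P), ∀ μ, x (π μ) = -x μ ∧ y (π μ) = -y μ)
    (Sig : Matrix (Fin D) (Fin D) ℝ)
    (hSig : Sig = (P : ℝ)⁻¹ • ∑ μ, Matrix.of fun i j => x μ i * x μ j)
    (hinv : IsUnit Sig.det)
    (β : Fin D → ℝ) (hβ : β = (P : ℝ)⁻¹ • ∑ μ, y μ • x μ)
    (wstar : Fin D → ℝ) (hw : wstar = Sig⁻¹ *ᵥ β) :
    (∀ (H : ℕ) (α : ℝ), α ∈ Set.Icc (0 : ℝ) 1 →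
      ∀ (w1 : Fin H → Fin D → ℝ) (w2 : Fin H → ℝ),
        (1 / (2 * (P : ℝ))) * ∑ μ, (y μ - ∑ i, wstar i * x μ i) ^ 2
          ≤ (1 / (2 * (P : ℝ))) * ∑ μ,
              (y μ - ∑ h, w2 h * max (∑ i, w1 h i * x μ i)
                (α * ∑ i, w1 h i * x μ i)) ^ 2) ∧
    (∃ (H : ℕ) (α : ℝ), α ∈ Set.Icc (0 : ℝ) 1 ∧
      ∃ (w1 : Fin H → Fin D → ℝ) (w2 : Fin H → ℝ),
        ∀ v : Fin D → ℝ,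
          (∑ h, w2 h * max (∑ i, w1 h i * v i) (α * ∑ i, w1 h i * v i))
            = ∑ i, wstar i * v i) := by
  constructor
  · intro H α hα w1 w2
    rcases Nat.eq_zero_or_pos P with hP | hP
    · subst hP; simp
    have hPne : (P : ℝ) ≠ 0 := Nat.cast_ne_zero.mpr hP.ne'
    obtain ⟨π, hπ⟩ := hsym
    set f : Fin P → ℝ := fun μ =>
      ∑ h, w2 h * max (∑ i, w1 h i * x μ i) (α * ∑ i, w1 h i * x μ i) with hf
    set w : Fin D → ℝ := fun i => ((1+α)/2) * ∑ h, w2 h * w1 h i with hwdef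
    -- Sig *ᵥ wstar = β
    have hSb : Sig *ᵥ wstar = β := by
      rw [hw, Matrix.mulVec_mulVec, Matrix.mul_nonsing_inv _ hinv, Matrix.one_mulVec]
    -- orthogonality of residuals
    have hortho : ∀ i, ∑ μ, (y μ - ∑ j, wstar j * x μ j) * x μ i = 0 := by
      intro i
      have h1 : ∑ μ, y μ * x μ i = (P : ℝ) * β i := by
        rw [hβ]
        simp only [Pi.smul_apply, Finset.sum_apply, smul_eq_mul]
        field_simp
      have h2 : ∑ μ, (∑ j, wstar j * x μ j) * x μ i = (P : ℝ) * β i := by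
        rw [← hSb]
        have hSe : (Sig *ᵥ wstar) i = ∑ j, ((P : ℝ)⁻¹ * ∑ μ, x μ i * x μ j) * wstar j := by
          rw [hSig]
          simp [Matrix.mulVec, dotProduct, Matrix.sum_apply, Finset.mul_sum]
        calc ∑ μ, (∑ j, wstar j * x μ j) * x μ i
            = ∑ μ, ∑ j, wstar j * x μ j * x μ i := by
              exact Finset.sum_congr rfl fun μ _ => Finset.sum_mul _ _ _
          _ = ∑ j, ∑ μ, wstar j * x μ j * x μ i := Finset.sum_comm
          _ = ∑ j, (P : ℝ) * (((P : ℝ)⁻¹ * ∑ μ, x μ i * x μ j) * wstar j) := by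
              apply Finset.sum_congr rfl
              intro j _
              rw [← mul_assoc,
                show (P : ℝ) * ((P : ℝ)⁻¹ * ∑ μ, x μ i * x μ j) = ∑ μ, x μ i * x μ j by
                  field_simp,
                Finset.sum_mul]
              exact Finset.sum_congr rfl fun μ _ => by ring
          _ = (P : ℝ) * (Sig *ᵥ wstar) i := by rw [hSe, Finset.mul_sum]
      rw [show (fun μ => (y μ - ∑ j, wstar j * x μ j) * x μ i) = fun μ =>
        y μ * x μ i - (∑ j, wstar j * x μ j) * x μ i by funext μ; ring]
      rw [Finset.sum_sub_distrib, h1, h2, sub_self]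
    -- odd part identity
    have hkey : ∀ μ, f μ - f (π μ) = 2 * ∑ i, w i * x μ i := by
      intro μ
      have hx : ∀ i, x (π μ) i = -(x μ i) := fun i => by rw [(hπ μ).1]; simp
      have hz : ∀ h : Fin H, ∑ i, w1 h i * x (π μ) i = -(∑ i, w1 h i * x μ i) := by
        intro h
        rw [← Finset.sum_neg_distrib]
        exact Finset.sum_congr rfl fun i _ => by rw [hx i]; ring
      have e1 : f μ - f (π μ) = ∑ h, w2 h * ((1+α) * ∑ i, w1 h i * x μ i) := by
        simp only [hf]
        rw [← Finset.sum_sub_distrib]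
        apply Finset.sum_congr rfl
        intro h _
        rw [hz h, ← mul_sub, lrelu_odd α _ hα.2]
      have e2 : 2 * ∑ i, w i * x μ i = ∑ h, w2 h * ((1+α) * ∑ i, w1 h i * x μ i) := by
        simp only [hwdef]
        simp_rw [Finset.mul_sum, Finset.sum_mul, Finset.mul_sum]
        rw [Finset.sum_comm]
        apply Finset.sum_congr rfl
        intro h _
        apply Finset.sum_congr rfl
        intro i _
        ring
      rw [e1, e2]
    -- symmetrization step
    have step1 : ∑ μ, (y μ - ∑ i, w i * x μ i) ^ 2 ≤ ∑ μ, (y μ - f μ) ^ 2 := by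
      have hre : ∑ μ, (y μ - f μ) ^ 2 = ∑ μ, (y (π μ) - f (π μ)) ^ 2 :=
        (Equiv.sum_comp π fun μ => (y μ - f μ) ^ 2).symm
      have hper : ∀ μ, 2 * (y μ - ∑ i, w i * x μ i) ^ 2
          ≤ (y μ - f μ) ^ 2 + (y (π μ) - f (π μ)) ^ 2 := by
        intro μ
        rw [(hπ μ).2]
        have hk := hkey μ
        have hfe : f μ = f (π μ) + 2 * ∑ i, w i * x μ i := by linarith
        rw [hfe]
        nlinarith [sq_nonneg (f (π μ) + ∑ i, w i * x μ i)]
      have hs := Finset.sum_le_sum (fun μ (_ : μ ∈ Finset.univ) => hper μ)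
      rw [← Finset.mul_sum, Finset.sum_add_distrib, ← hre] at hs
      linarith
    -- OLS step
    have step2 : ∑ μ, (y μ - ∑ i, wstar i * x μ i) ^ 2
        ≤ ∑ μ, (y μ - ∑ i, w i * x μ i) ^ 2 := by
      have expand : ∀ μ, (y μ - ∑ i, w i * x μ i) ^ 2
          = (y μ - ∑ i, wstar i * x μ i) ^ 2
            + (∑ i, (wstar i - w i) * x μ i) ^ 2
            + 2 * ((y μ - ∑ j, wstar j * x μ j) * ∑ i, (wstar i - w i) * x μ i) := by
        intro μ
        have hd : ∑ i, (wstar i - w i) * x μ i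
            = (∑ i, wstar i * x μ i) - ∑ i, w i * x μ i := by
          rw [← Finset.sum_sub_distrib]
          exact Finset.sum_congr rfl fun i _ => by ring
        rw [hd]; ring
      have hcross : ∑ μ, (y μ - ∑ j, wstar j * x μ j) * ∑ i, (wstar i - w i) * x μ i = 0 := by
        have : ∀ μ, (y μ - ∑ j, wstar j * x μ j) * ∑ i, (wstar i - w i) * x μ i
            = ∑ i, (wstar i - w i) * ((y μ - ∑ j, wstar j * x μ j) * x μ i) := by
          intro μ
          rw [Finset.mul_sum]
          exact Finset.sum_congr rfl fun i _ => by ring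
        simp_rw [this]
        rw [Finset.sum_comm]
        apply Finset.sum_eq_zero
        intro i _
        rw [← Finset.mul_sum, hortho i, mul_zero]
      calc ∑ μ, (y μ - ∑ i, wstar i * x μ i) ^ 2
          ≤ ∑ μ, ((y μ - ∑ i, wstar i * x μ i) ^ 2 + (∑ i, (wstar i - w i) * x μ i) ^ 2) := by
            apply Finset.sum_le_sum
            intro μ _
            nlinarith [sq_nonneg (∑ i, (wstar i - w i) * x μ i)]
        _ = ∑ μ, (y μ - ∑ i, w i * x μ i) ^ 2 := by
            simp_rw [expand]
            rw [Finset.sum_add_distrib, Finset.sum_add_distrib, ← Finset.mul_sum, hcross,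
              mul_zero, add_zero, Finset.sum_add_distrib]
    have hc : (0 : ℝ) ≤ 1 / (2 * (P : ℝ)) := by positivity
    exact mul_le_mul_of_nonneg_left (le_trans step2 step1) hc
  · refine ⟨1, 1, ⟨zero_le_one, le_refl 1⟩, fun _ => wstar, fun _ => 1, fun v => ?_⟩
    simp [max_self]
end

section
/- Under the hypotheses of the orthonormal-data block-weight setup — inputs x_μᵀx_ν = 0 for μ ≠ ν, x_μᵀx_μ = 1, y_μ ≠ 0, S_A = {μ : y_μ > 0}, S_B = {μ : y_μ < 0}, weights W₁ᴬ = u_A·r_A·β̄_Aᵀ, W₁ᴮ = u_B·r_B·β̄_Bᵀ, W₂ᴬ = u_A·r_Aᵀ, W₂ᴮ = −u_B·r_Bᵀ with u_A, u_B > 0 and unit vectors r_A, r_B with nonnegative entries, σ(z) = max(z,0), σ'(z) = 1 for z > 0 and σ'(z) = 0 for z ≤ 0 — the square-loss gradient with respect to each block equals a linear-network gradient on the corresponding data subset: for C ∈ {A, B}, (1/P)·∑_{μ=1}^P σ'(W₁ᶜx_μ) ⊙ (W₂ᶜ)ᵀ·(y_μ − W₂σ(W₁x_μ))·x_μᵀ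 = (W₂ᶜ)ᵀ·(β_Cᵀ − W₂ᶜW₁ᶜΣ_C) and (1/P)·∑_{μ=1}^P (y_μ − W₂σ(W₁x_μ))·σ(W₁ᶜx_μ)ᵀ = (β_Cᵀ − W₂ᶜW₁ᶜΣ_C)·(W₁ᶜ)ᵀ, where β_C = (1/P)·∑_{μ∈S_C} y_μx_μ and Σ_C = (1/P)·∑_{μ∈S_C} x_μx_μᵀ. -/
/-- in the orthonormal-data block-weight setup, the square-loss gradient
with respect to each block of a two-layer bias-free ReLU network (σ'(z) = 1 for z > 0,
σ'(z) = 0 for z ≤ 0) equals the gradient of a two-layer linear network trained on the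
corresponding subset of the data:
(1/P)∑_μ σ'(W₁ᶜxμ) ⊙ (W₂ᶜ)ᵀ(yμ − W₂σ(W₁xμ))xμᵀ = (W₂ᶜ)ᵀ(β_Cᵀ − W₂ᶜW₁ᶜΣ_C) and
(1/P)∑_μ (yμ − W₂σ(W₁xμ))σ(W₁ᶜxμ)ᵀ = (β_Cᵀ − W₂ᶜW₁ᶜΣ_C)(W₁ᶜ)ᵀ, for C ∈ {A, B}. -/
theorem stmt_18 (D P HA HB : ℕ)
    (x : Fin P → Fin D → ℝ) (y : Fin P → ℝ)
    (horth : ∀ μ ν, μ ≠ ν → ∑ i, x μ i * x ν i = 0)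
    (hnorm : ∀ μ, ∑ i, x μ i * x μ i = 1)
    (hy : ∀ μ, y μ ≠ 0)
    (hApos : ∃ μ, 0 < y μ) (hBneg : ∃ μ, y μ < 0)
    (bA : Fin D → ℝ)
    (hbA : bA = ∑ μ ∈ Finset.filter (fun μ => 0 < y μ) Finset.univ, y μ • x μ)
    (bB : Fin D → ℝ)
    (hbB : bB = ∑ μ ∈ Finset.filter (fun μ => y μ < 0) Finset.univ, y μ • x μ)
    (bbA : Fin D → ℝ) (hbbA : bbA = (Real.sqrt (∑ i, bA i ^ 2))⁻¹ • bA)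
    (bbB : Fin D → ℝ) (hbbB : bbB = -((Real.sqrt (∑ i, bB i ^ 2))⁻¹ • bB))
    (uA uB : ℝ) (huA : 0 < uA) (huB : 0 < uB)
    (rA : Fin HA → ℝ) (rB : Fin HB → ℝ)
    (hrA1 : ∑ h, rA h ^ 2 = 1) (hrB1 : ∑ h, rB h ^ 2 = 1)
    (hrA0 : ∀ h, 0 ≤ rA h) (hrB0 : ∀ h, 0 ≤ rB h)
    (W1A : Fin HA → Fin D → ℝ) (hW1A : ∀ h i, W1A h i = uA * rA h * bbA i)
    (W1B : Fin HB → Fin D → ℝ) (hW1B : ∀ h i, W1B h i = uB * rB h * bbB i)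
    (f : (Fin D → ℝ) → ℝ)
    (hf : ∀ v, f v = (∑ h, (uA * rA h) * max (∑ i, W1A h i * v i) 0)
                   + ∑ h, (-(uB * rB h)) * max (∑ i, W1B h i * v i) 0)
    (βA : Fin D → ℝ)
    (hβA : βA = (P : ℝ)⁻¹ • ∑ μ ∈ Finset.filter (fun μ => 0 < y μ) Finset.univ,
      y μ • x μ)
    (βB : Fin D → ℝ)
    (hβB : βB = (P : ℝ)⁻¹ • ∑ μ ∈ Finset.filter (fun μ => y μ < 0) Finset.univ,
      y μ • x μ)
    (SA : Fin D → Fin D → ℝ)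
    (hSA : ∀ i j, SA i j = (P : ℝ)⁻¹ *
      ∑ μ ∈ Finset.filter (fun μ => 0 < y μ) Finset.univ, x μ i * x μ j)
    (SB : Fin D → Fin D → ℝ)
    (hSB : ∀ i j, SB i j = (P : ℝ)⁻¹ *
      ∑ μ ∈ Finset.filter (fun μ => y μ < 0) Finset.univ, x μ i * x μ j) :
    (∀ h j, (P : ℝ)⁻¹ * ∑ μ,
        (if 0 < ∑ i, W1A h i * x μ i then (1 : ℝ) else 0) *
          ((uA * rA h) * (y μ - f (x μ))) * x μ j
      = (uA * rA h) * (βA j - ∑ i, (∑ h', (uA * rA h') * W1A h' i) * SA i j)) ∧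
    (∀ h, (P : ℝ)⁻¹ * ∑ μ, (y μ - f (x μ)) * max (∑ i, W1A h i * x μ i) 0
      = ∑ j, (βA j - ∑ i, (∑ h', (uA * rA h') * W1A h' i) * SA i j) * W1A h j) ∧
    (∀ h j, (P : ℝ)⁻¹ * ∑ μ,
        (if 0 < ∑ i, W1B h i * x μ i then (1 : ℝ) else 0) *
          ((-(uB * rB h)) * (y μ - f (x μ))) * x μ j
      = (-(uB * rB h)) * (βB j - ∑ i, (∑ h', (-(uB * rB h')) * W1B h' i) * SB i j)) ∧
    (∀ h, (P : ℝ)⁻¹ * ∑ μ, (y μ - f (x μ)) * max (∑ i, W1B h i * x μ i) 0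
      = ∑ j, (βB j - ∑ i, (∑ h', (-(uB * rB h')) * W1B h' i) * SB i j) * W1B h j) := by
    classical
  set SAf : Finset (Fin P) := Finset.filter (fun μ => 0 < y μ) Finset.univ with hSAf
  set SBf : Finset (Fin P) := Finset.filter (fun μ => y μ < 0) Finset.univ with hSBf
  have hdot : ∀ ν μ : Fin P, ∑ i, x ν i * x μ i = if ν = μ then 1 else 0 := by
    intro ν μ
    by_cases h : ν = μ
    · subst h; simp [hnorm ν]
    · simp [h, horth ν μ h]
  have hbAj : ∀ j, bA j = ∑ μ ∈ SAf, y μ * x μ j := by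
    intro j; rw [hbA]; simp
  have hbBj : ∀ j, bB j = ∑ μ ∈ SBf, y μ * x μ j := by
    intro j; rw [hbB]; simp
  have hbAx : ∀ μ, ∑ i, bA i * x μ i = if 0 < y μ then y μ else 0 := by
    intro μ
    calc ∑ i, bA i * x μ i = ∑ i, ∑ ν ∈ SAf, y ν * x ν i * x μ i := by
          refine Finset.sum_congr rfl fun i _ => ?_
          rw [hbAj i, Finset.sum_mul]
      _ = ∑ ν ∈ SAf, y ν * ∑ i, x ν i * x μ i := by
          rw [Finset.sum_comm]
          refine Finset.sum_congr rfl fun ν _ => ?_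
          rw [Finset.mul_sum]
          exact Finset.sum_congr rfl fun i _ => by ring
      _ = ∑ ν ∈ SAf, if ν = μ then y ν else 0 := by
          simp only [hdot, mul_ite, mul_one, mul_zero]
      _ = if μ ∈ SAf then y μ else 0 := Finset.sum_ite_eq' SAf μ y
      _ = _ := by rw [hSAf]; simp
  have hbBx : ∀ μ, ∑ i, bB i * x μ i = if y μ < 0 then y μ else 0 := by
    intro μ
    calc ∑ i, bB i * x μ i = ∑ i, ∑ ν ∈ SBf, y ν * x ν i * x μ i := by
          refine Finset.sum_congr rfl fun i _ => ?_
          rw [hbBj i, Finset.sum_mul]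
      _ = ∑ ν ∈ SBf, y ν * ∑ i, x ν i * x μ i := by
          rw [Finset.sum_comm]
          refine Finset.sum_congr rfl fun ν _ => ?_
          rw [Finset.mul_sum]
          exact Finset.sum_congr rfl fun i _ => by ring
      _ = ∑ ν ∈ SBf, if ν = μ then y ν else 0 := by
          simp only [hdot, mul_ite, mul_one, mul_zero]
      _ = if μ ∈ SBf then y μ else 0 := Finset.sum_ite_eq' SBf μ y
      _ = _ := by rw [hSBf]; simp
  have hsqA : ∑ i, bA i ^ 2 = ∑ μ ∈ SAf, y μ ^ 2 := by
    calc ∑ i, bA i ^ 2 = ∑ i, ∑ ν ∈ SAf, y ν * (bA i * x ν i) := by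
          refine Finset.sum_congr rfl fun i _ => ?_
          rw [pow_two]
          nth_rewrite 2 [hbAj i]
          rw [Finset.mul_sum]
          exact Finset.sum_congr rfl fun ν _ => by ring
      _ = ∑ ν ∈ SAf, y ν * ∑ i, bA i * x ν i := by
          rw [Finset.sum_comm]
          exact Finset.sum_congr rfl fun ν _ => (Finset.mul_sum _ _ _).symm
      _ = ∑ μ ∈ SAf, y μ ^ 2 := by
          refine Finset.sum_congr rfl fun ν hν => ?_
          rw [hSAf] at hν
          rw [hbAx ν, if_pos (Finset.mem_filter.1 hν).2, pow_two]
  have hsqB : ∑ i, bB i ^ 2 = ∑ μ ∈ SBf, y μ ^ 2 := by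
    calc ∑ i, bB i ^ 2 = ∑ i, ∑ ν ∈ SBf, y ν * (bB i * x ν i) := by
          refine Finset.sum_congr rfl fun i _ => ?_
          rw [pow_two]
          nth_rewrite 2 [hbBj i]
          rw [Finset.mul_sum]
          exact Finset.sum_congr rfl fun ν _ => by ring
      _ = ∑ ν ∈ SBf, y ν * ∑ i, bB i * x ν i := by
          rw [Finset.sum_comm]
          exact Finset.sum_congr rfl fun ν _ => (Finset.mul_sum _ _ _).symm
      _ = ∑ μ ∈ SBf, y μ ^ 2 := by
          refine Finset.sum_congr rfl fun ν hν => ?_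
          rw [hSBf] at hν
          rw [hbBx ν, if_pos (Finset.mem_filter.1 hν).2, pow_two]
  set nA : ℝ := Real.sqrt (∑ i, bA i ^ 2) with hnAd
  set nB : ℝ := Real.sqrt (∑ i, bB i ^ 2) with hnBd
  have hsumposA : 0 < ∑ μ ∈ SAf, y μ ^ 2 := by
    obtain ⟨μ0, hμ0⟩ := hApos
    refine Finset.sum_pos' (fun μ _ => sq_nonneg _) ⟨μ0, ?_, pow_pos hμ0 2⟩
    rw [hSAf]; exact Finset.mem_filter.2 ⟨Finset.mem_univ _, hμ0⟩
  have hsumposB : 0 < ∑ μ ∈ SBf, y μ ^ 2 := by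
    obtain ⟨μ0, hμ0⟩ := hBneg
    refine Finset.sum_pos' (fun μ _ => sq_nonneg _) ⟨μ0, ?_, ?_⟩
    · rw [hSBf]; exact Finset.mem_filter.2 ⟨Finset.mem_univ _, hμ0⟩
    · nlinarith
  have hnApos : 0 < nA := Real.sqrt_pos.2 (by rw [hsqA]; exact hsumposA)
  have hnBpos : 0 < nB := Real.sqrt_pos.2 (by rw [hsqB]; exact hsumposB)
  have hnAsq : nA * nA = ∑ μ ∈ SAf, y μ ^ 2 := by
    rw [hnAd, Real.mul_self_sqrt (by positivity), hsqA]
  have hnBsq : nB * nB = ∑ μ ∈ SBf, y μ ^ 2 := by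
    rw [hnBd, Real.mul_self_sqrt (by positivity), hsqB]
  have hW1Ai : ∀ h i, W1A h i = uA * rA h * (nA⁻¹ * bA i) := by
    intro h i; rw [hW1A, hbbA]; simp
  have hW1Bi : ∀ h i, W1B h i = uB * rB h * (-(nB⁻¹ * bB i)) := by
    intro h i; rw [hW1B, hbbB]; simp
  have hdA : ∀ h μ, ∑ i, W1A h i * x μ i
      = uA * rA h * nA⁻¹ * (if 0 < y μ then y μ else 0) := by
    intro h μ
    calc ∑ i, W1A h i * x μ i = uA * rA h * nA⁻¹ * ∑ i, bA i * x μ i := by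
          rw [Finset.mul_sum]
          exact Finset.sum_congr rfl fun i _ => by rw [hW1Ai]; ring
      _ = _ := by rw [hbAx]
  have hdB : ∀ h μ, ∑ i, W1B h i * x μ i
      = uB * rB h * nB⁻¹ * (if y μ < 0 then -y μ else 0) := by
    intro h μ
    calc ∑ i, W1B h i * x μ i = -(uB * rB h * nB⁻¹) * ∑ i, bB i * x μ i := by
          rw [Finset.mul_sum]
          exact Finset.sum_congr rfl fun i _ => by rw [hW1Bi]; ring
      _ = _ := by rw [hbBx]; split_ifs <;> ring
  have hfx : ∀ μ, f (x μ)
      = (if 0 < y μ then uA ^ 2 * nA⁻¹ else uB ^ 2 * nB⁻¹) * y μ := by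
    intro μ
    rw [hf]
    have h1 : ∀ h, max (∑ i, W1A h i * x μ i) 0
        = uA * rA h * nA⁻¹ * (if 0 < y μ then y μ else 0) := by
      intro h
      rw [hdA]
      refine max_eq_left ?_
      have ht : 0 ≤ (if 0 < y μ then y μ else 0) := by
        split_ifs with hc
        · exact hc.le
        · exact le_refl 0
      exact mul_nonneg (mul_nonneg (mul_nonneg huA.le (hrA0 h)) (by positivity)) ht
    have h2 : ∀ h, max (∑ i, W1B h i * x μ i) 0
        = uB * rB h * nB⁻¹ * (if y μ < 0 then -y μ else 0) := by
      intro h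
      rw [hdB]
      refine max_eq_left ?_
      have ht : 0 ≤ (if y μ < 0 then -y μ else 0) := by
        split_ifs with hc
        · linarith
        · exact le_refl 0
      exact mul_nonneg (mul_nonneg (mul_nonneg huB.le (hrB0 h)) (by positivity)) ht
    have e1 : ∑ h, uA * rA h * max (∑ i, W1A h i * x μ i) 0
        = (∑ h, rA h ^ 2) * (uA ^ 2 * nA⁻¹ * (if 0 < y μ then y μ else 0)) := by
      rw [Finset.sum_mul]
      exact Finset.sum_congr rfl fun h _ => by rw [h1 h]; ring
    have e2 : ∑ h, -(uB * rB h) * max (∑ i, W1B h i * x μ i) 0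
        = (∑ h, rB h ^ 2) * (-(uB ^ 2 * nB⁻¹ * (if y μ < 0 then -y μ else 0))) := by
      rw [Finset.sum_mul]
      exact Finset.sum_congr rfl fun h _ => by rw [h2 h]; ring
    rw [e1, e2, hrA1, hrB1, one_mul, one_mul]
    rcases lt_trichotomy (y μ) 0 with hc | hc | hc
    · rw [if_neg (by linarith), if_pos hc, if_neg (by linarith)]; ring
    · exact absurd hc (hy μ)
    · rw [if_pos hc, if_neg (by linarith), if_pos hc]; ring
  have hres : ∀ μ, y μ - f (x μ)
      = (if 0 < y μ then 1 - uA ^ 2 * nA⁻¹ else 1 - uB ^ 2 * nB⁻¹) * y μ := by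
    intro μ; rw [hfx]; split_ifs <;> ring
  have hβAj : ∀ j, βA j = (P : ℝ)⁻¹ * bA j := by
    intro j; rw [hβA, hbA]; simp
  have hβBj : ∀ j, βB j = (P : ℝ)⁻¹ * bB j := by
    intro j; rw [hβB, hbB]; simp
  have hTA : ∀ j, ∑ i, (∑ h', uA * rA h' * W1A h' i) * SA i j
      = uA ^ 2 * nA⁻¹ * ((P : ℝ)⁻¹ * bA j) := by
    intro j
    have hin : ∀ i, ∑ h', uA * rA h' * W1A h' i = uA ^ 2 * (nA⁻¹ * bA i) := by
      intro i
      calc ∑ h', uA * rA h' * W1A h' i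
          = (∑ h', rA h' ^ 2) * (uA ^ 2 * (nA⁻¹ * bA i)) := by
            rw [Finset.sum_mul]
            exact Finset.sum_congr rfl fun h _ => by rw [hW1Ai]; ring
        _ = _ := by rw [hrA1, one_mul]
    calc ∑ i, (∑ h', uA * rA h' * W1A h' i) * SA i j
        = ∑ i, ∑ μ ∈ SAf, uA ^ 2 * nA⁻¹ * (P : ℝ)⁻¹ * (bA i * x μ i * x μ j) := by
          refine Finset.sum_congr rfl fun i _ => ?_
          rw [hin, hSA]
          rw [Finset.mul_sum, Finset.mul_sum]
          exact Finset.sum_congr rfl fun μ _ => by ring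
      _ = ∑ μ ∈ SAf, uA ^ 2 * nA⁻¹ * (P : ℝ)⁻¹ * ((∑ i, bA i * x μ i) * x μ j) := by
          rw [Finset.sum_comm]
          refine Finset.sum_congr rfl fun μ _ => ?_
          rw [← Finset.mul_sum, ← Finset.sum_mul]
      _ = ∑ μ ∈ SAf, uA ^ 2 * nA⁻¹ * (P : ℝ)⁻¹ * (y μ * x μ j) := by
          refine Finset.sum_congr rfl fun μ hμ => ?_
          rw [hSAf] at hμ
          rw [hbAx μ, if_pos (Finset.mem_filter.1 hμ).2]
      _ = uA ^ 2 * nA⁻¹ * ((P : ℝ)⁻¹ * bA j) := by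
          rw [← Finset.mul_sum, ← hbAj j]; ring
  have hTB : ∀ j, ∑ i, (∑ h', -(uB * rB h') * W1B h' i) * SB i j
      = uB ^ 2 * nB⁻¹ * ((P : ℝ)⁻¹ * bB j) := by
    intro j
    have hin : ∀ i, ∑ h', -(uB * rB h') * W1B h' i = uB ^ 2 * (nB⁻¹ * bB i) := by
      intro i
      calc ∑ h', -(uB * rB h') * W1B h' i
          = (∑ h', rB h' ^ 2) * (uB ^ 2 * (nB⁻¹ * bB i)) := by
            rw [Finset.sum_mul]
            exact Finset.sum_congr rfl fun h _ => by rw [hW1Bi]; ring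
        _ = _ := by rw [hrB1, one_mul]
    calc ∑ i, (∑ h', -(uB * rB h') * W1B h' i) * SB i j
        = ∑ i, ∑ μ ∈ SBf, uB ^ 2 * nB⁻¹ * (P : ℝ)⁻¹ * (bB i * x μ i * x μ j) := by
          refine Finset.sum_congr rfl fun i _ => ?_
          rw [hin, hSB]
          rw [Finset.mul_sum, Finset.mul_sum]
          exact Finset.sum_congr rfl fun μ _ => by ring
      _ = ∑ μ ∈ SBf, uB ^ 2 * nB⁻¹ * (P : ℝ)⁻¹ * ((∑ i, bB i * x μ i) * x μ j) := by
          rw [Finset.sum_comm]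
          refine Finset.sum_congr rfl fun μ _ => ?_
          rw [← Finset.mul_sum, ← Finset.sum_mul]
      _ = ∑ μ ∈ SBf, uB ^ 2 * nB⁻¹ * (P : ℝ)⁻¹ * (y μ * x μ j) := by
          refine Finset.sum_congr rfl fun μ hμ => ?_
          rw [hSBf] at hμ
          rw [hbBx μ, if_pos (Finset.mem_filter.1 hμ).2]
      _ = uB ^ 2 * nB⁻¹ * ((P : ℝ)⁻¹ * bB j) := by
          rw [← Finset.mul_sum, ← hbBj j]; ring
  refine ⟨?_, ?_, ?_, ?_⟩
  · -- Goal 1A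
    intro h j
    by_cases hr0 : rA h = 0
    · simp [hr0]
    · have hr : 0 < rA h := (hrA0 h).lt_of_ne (Ne.symm hr0)
      have hL : ∑ μ, (if 0 < ∑ i, W1A h i * x μ i then (1 : ℝ) else 0) *
            ((uA * rA h) * (y μ - f (x μ))) * x μ j
          = ∑ μ ∈ SAf, uA * rA h * (1 - uA ^ 2 * nA⁻¹) * (y μ * x μ j) := by
        rw [hSAf, Finset.sum_filter]
        refine Finset.sum_congr rfl fun μ _ => ?_
        rw [hdA, hres]
        by_cases hc : 0 < y μ
        · have hpos : 0 < uA * rA h * nA⁻¹ * (if 0 < y μ then y μ else 0) := by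
            rw [if_pos hc]
            exact mul_pos (mul_pos (mul_pos huA hr) (by positivity)) hc
          rw [if_pos hpos, if_pos hc, if_pos hc]; ring
        · simp only [if_neg hc, mul_zero, if_neg (lt_irrefl (0 : ℝ))]; ring
      rw [hL, ← Finset.mul_sum, ← hbAj j, hβAj j, hTA j]; ring
  · -- Goal 2A
    intro h
    have hL : ∑ μ, (y μ - f (x μ)) * max (∑ i, W1A h i * x μ i) 0
        = ∑ μ ∈ SAf, (1 - uA ^ 2 * nA⁻¹) * (uA * rA h * nA⁻¹) * (y μ * y μ) := by
      rw [hSAf, Finset.sum_filter]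
      refine Finset.sum_congr rfl fun μ _ => ?_
      rw [hdA, hres]
      by_cases hc : 0 < y μ
      · rw [if_pos hc, if_pos hc, if_pos hc,
          max_eq_left (mul_nonneg (mul_nonneg (mul_nonneg huA.le (hrA0 h))
            (by positivity)) hc.le)]
        ring
      · simp only [if_neg hc, mul_zero]; simp
    have hsq' : ∑ j, bA j * bA j = ∑ μ ∈ SAf, y μ * y μ := by
      simpa only [pow_two] using hsqA
    have hR : ∑ j, (βA j - ∑ i, (∑ h', (uA * rA h') * W1A h' i) * SA i j) * W1A h j
        = (1 - uA ^ 2 * nA⁻¹) * (uA * rA h * nA⁻¹) *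
          ((P : ℝ)⁻¹ * ∑ j, bA j * bA j) := by
      calc ∑ j, (βA j - ∑ i, (∑ h', (uA * rA h') * W1A h' i) * SA i j) * W1A h j
          = ∑ j, (1 - uA ^ 2 * nA⁻¹) * (uA * rA h * nA⁻¹) *
              ((P : ℝ)⁻¹ * (bA j * bA j)) := by
            refine Finset.sum_congr rfl fun j _ => ?_
            rw [hβAj, hTA, hW1Ai]; ring
        _ = _ := by rw [← Finset.mul_sum, ← Finset.mul_sum]
    rw [hL, ← Finset.mul_sum, hR, hsq']
    ring
  · -- Goal 1B
    intro h j
    by_cases hr0 : rB h = 0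
    · simp [hr0]
    · have hr : 0 < rB h := (hrB0 h).lt_of_ne (Ne.symm hr0)
      have hL : ∑ μ, (if 0 < ∑ i, W1B h i * x μ i then (1 : ℝ) else 0) *
            ((-(uB * rB h)) * (y μ - f (x μ))) * x μ j
          = ∑ μ ∈ SBf, -(uB * rB h) * (1 - uB ^ 2 * nB⁻¹) * (y μ * x μ j) := by
        rw [hSBf, Finset.sum_filter]
        refine Finset.sum_congr rfl fun μ _ => ?_
        rw [hdB, hres]
        by_cases hc : y μ < 0
        · have hpos : 0 < uB * rB h * nB⁻¹ * (if y μ < 0 then -y μ else 0) := by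
            rw [if_pos hc]
            exact mul_pos (mul_pos (mul_pos huB hr) (by positivity)) (by linarith)
          rw [if_pos hpos, if_pos hc, if_neg (by linarith : ¬0 < y μ)]; ring
        · simp only [if_neg hc, mul_zero, if_neg (lt_irrefl (0 : ℝ))]; ring
      rw [hL, ← Finset.mul_sum, ← hbBj j, hβBj j, hTB j]; ring
  · -- Goal 2B
    intro h
    have hL : ∑ μ, (y μ - f (x μ)) * max (∑ i, W1B h i * x μ i) 0
        = ∑ μ ∈ SBf, -((1 - uB ^ 2 * nB⁻¹) * (uB * rB h * nB⁻¹)) * (y μ * y μ) := by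
      rw [hSBf, Finset.sum_filter]
      refine Finset.sum_congr rfl fun μ _ => ?_
      rw [hdB, hres]
      by_cases hc : y μ < 0
      · rw [if_neg (by linarith : ¬0 < y μ), if_pos hc, if_pos hc,
          max_eq_left (mul_nonneg (mul_nonneg (mul_nonneg huB.le (hrB0 h))
            (by positivity)) (by linarith : (0 : ℝ) ≤ -y μ))]
        ring
      · simp only [if_neg hc, mul_zero]; simp
    have hsq' : ∑ j, bB j * bB j = ∑ μ ∈ SBf, y μ * y μ := by
      simpa only [pow_two] using hsqB
    have hR : ∑ j, (βB j - ∑ i, (∑ h', (-(uB * rB h')) * W1B h' i) * SB i j) * W1B h j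
        = -((1 - uB ^ 2 * nB⁻¹) * (uB * rB h * nB⁻¹)) *
          ((P : ℝ)⁻¹ * ∑ j, bB j * bB j) := by
      calc ∑ j, (βB j - ∑ i, (∑ h', (-(uB * rB h')) * W1B h' i) * SB i j) * W1B h j
          = ∑ j, -((1 - uB ^ 2 * nB⁻¹) * (uB * rB h * nB⁻¹)) *
              ((P : ℝ)⁻¹ * (bB j * bB j)) := by
            refine Finset.sum_congr rfl fun j _ => ?_
            rw [hβBj, hTB, hW1Bi]; ring
        _ = _ := by rw [← Finset.mul_sum, ← Finset.mul_sum]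
    rw [hL, ← Finset.mul_sum, hR, hsq']
    ring
end

section
/- Let σ(z) = max(z, 0) and L ≥ 3. Consider a depth-L bias-free ReLU network f(x) = W_L σ(W_{L-1} σ(⋯ σ(W_1 x))) whose weights have the following form for some u > 0: W₁ = u·r₁·rᵀ with ‖r‖ = ‖r₁‖ = 1; for 2 ≤ l ≤ L−1, each hidden layer l−1 and l carries a partition of its indices into sets P and N with all entries of r_l indexed by P nonnegative and all entries indexed by N nonpositive and ‖(r_l)|_P‖² = ‖(r_l)|_N‖² = 1/2 (similarly for r₁ and r_{L-1}), and (W_l)_{ij} = √2·u·(r_l)_i·(r_{l-1})_j when i and j lie in matching parts (both in P or both in N) and (W_l)_{ij} = 0 otherwise; and W_L = u·r_{L-1}ᵀ. Then all entries of W₂, …, W_{L-1} are nonnegative, the activations after the first layer can be dropped, and the network implements the linear map f(x) = W_L W_{L-1} ⋯ W_2 σ(W_1 x) = (1/2)·W_L W_{L-1} ⋯ W_1 x = (u/√2)^L · rᵀx for all x ∈ ℝ^D. -/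
open Matrix


lemma aux_relu (c t : ℝ) (hc : 0 ≤ c) : max (c * t) 0 = c * max t 0 := by
  rcases le_total t 0 with h | h
  · rw [max_eq_right (mul_nonpos_of_nonneg_of_nonpos hc h), max_eq_right h, mul_zero]
  · rw [max_eq_left (mul_nonneg hc h), max_eq_left h]

lemma aux_half_sum {n : ℕ} (P : Fin n → Prop) [DecidablePred P] (rr v : Fin n → ℝ)
    (h : ∑ j ∈ Finset.filter P Finset.univ, rr j ^ 2 = 1 / 2)
    (k : ℝ) (hv : ∀ j, P j → v j = k * rr j) :
    ∑ j, (if P j then rr j * v j else 0) = k / 2 := by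
  rw [Finset.sum_ite, Finset.sum_const_zero, add_zero]
  have h2 : ∑ j ∈ Finset.filter P Finset.univ, rr j * v j
      = ∑ j ∈ Finset.filter P Finset.univ, k * rr j ^ 2 :=
    Finset.sum_congr rfl fun j hj => by
      rw [hv j (Finset.mem_filter.mp hj).2]; ring
  rw [h2, ← Finset.mul_sum, h]; ring

/-- a depth-L (L ≥ 3) bias-free ReLU network whose weights have the
rank-one / block rank-two structure W₁ = u r₁ rᵀ, (W_l)_{ij} = √2·u·(r_l)_i·(r_{l-1})_j
on matching parts of the sign partitions (and 0 otherwise) for 2 ≤ l ≤ L−1, and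
W_L = u r_{L−1}ᵀ, has nonnegative intermediate weights, its activations after the first
layer can be dropped, and it implements the linear map
f(x) = W_L ⋯ W₂ σ(W₁x) = (1/2)·W_L ⋯ W₁ x = (u/√2)^L · rᵀx.
Here `W l` is the matrix of layer l+1 (so the paper's W_l is `W (l-1)`), `hid` is the
ReLU forward pass, `g` the forward pass with all activations after the first dropped,
and `p` the purely linear forward pass. -/
theorem stmt_19 (L : ℕ) (hL : 3 ≤ L) (u : ℝ) (hu : 0 < u)
    (dims : ℕ → ℕ) (hdL : dims L = 1)
    (r : Fin (dims 0) → ℝ) (hr : ∑ i, r i ^ 2 = 1)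
    (rr : (l : ℕ) → Fin (dims l) → ℝ)
    (Ppart : (l : ℕ) → Fin (dims l) → Prop) [∀ l, DecidablePred (Ppart l)]
    (hparts : ∀ l, 1 ≤ l → l ≤ L - 1 →
      (∀ i, Ppart l i → 0 ≤ rr l i) ∧
      (∀ i, ¬ Ppart l i → rr l i ≤ 0) ∧
      (∑ i ∈ Finset.filter (fun i => Ppart l i) Finset.univ, rr l i ^ 2 = 1 / 2) ∧
      (∑ i ∈ Finset.filter (fun i => ¬ Ppart l i) Finset.univ, rr l i ^ 2 = 1 / 2))
    (hr1 : ∑ i, rr 1 i ^ 2 = 1)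
    (W : (l : ℕ) → Matrix (Fin (dims (l + 1))) (Fin (dims l)) ℝ)
    (hW1 : ∀ i j, W 0 i j = u * rr 1 i * r j)
    (hWmid : ∀ l, 1 ≤ l → l ≤ L - 2 →
      ∀ (i : Fin (dims (l + 1))) (j : Fin (dims l)),
        W l i j = if (Ppart (l + 1) i ∧ Ppart l j) ∨ (¬ Ppart (l + 1) i ∧ ¬ Ppart l j)
          then Real.sqrt 2 * u * rr (l + 1) i * rr l j else 0)
    (hWL : ∀ (i : Fin (dims (L - 1 + 1))) (j : Fin (dims (L - 1))),
      W (L - 1) i j = u * rr (L - 1) j)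
    (hid : (Fin (dims 0) → ℝ) → (l : ℕ) → Fin (dims l) → ℝ)
    (hid1 : ∀ x, hid x 1 = W 0 *ᵥ x)
    (hidrec : ∀ x l, 1 ≤ l → hid x (l + 1) = W l *ᵥ fun i => max (hid x l i) 0)
    (g : (Fin (dims 0) → ℝ) → (l : ℕ) → Fin (dims l) → ℝ)
    (g1 : ∀ x, g x 1 = fun i => max ((W 0 *ᵥ x) i) 0)
    (grec : ∀ x l, 1 ≤ l → g x (l + 1) = W l *ᵥ g x l)
    (p : (Fin (dims 0) → ℝ) → (l : ℕ) → Fin (dims l) → ℝ)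
    (p1 : ∀ x, p x 1 = W 0 *ᵥ x)
    (prec : ∀ x l, 1 ≤ l → p x (l + 1) = W l *ᵥ p x l) :
    (∀ l, 1 ≤ l → l ≤ L - 2 → ∀ (i : Fin (dims (l + 1))) (j : Fin (dims l)),
      0 ≤ W l i j) ∧
    (∀ x, hid x L = g x L) ∧
    (∀ x, hid x L = (1 / 2 : ℝ) • p x L) ∧
    (∀ x (i : Fin (dims L)),
      hid x L i = (u / Real.sqrt 2) ^ L * ∑ j, r j * x j) := by
  obtain ⟨K, rfl⟩ : ∃ K, L = K + 3 := ⟨L - 3, by omega⟩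
  have hqpos : (0:ℝ) < Real.sqrt 2 := by positivity
  have hqne : Real.sqrt 2 ≠ 0 := ne_of_gt hqpos
  have e1 : Real.sqrt 2 * Real.sqrt 2 = 2 := Real.mul_self_sqrt (by norm_num)
  have e2 : Real.sqrt 2 * (u / Real.sqrt 2) = u := by
    rw [mul_comm]; exact div_mul_cancel₀ u hqne
  have hWL' : ∀ (i : Fin (dims (K + 2 + 1))) (j : Fin (dims (K + 2))),
      W (K + 2) i j = u * rr (K + 2) j := hWL
  -- Part 1: nonnegativity of intermediate weights
  have Wnn : ∀ l, 1 ≤ l → l ≤ K + 3 - 2 →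
      ∀ (i : Fin (dims (l + 1))) (j : Fin (dims l)), 0 ≤ W l i j := by
    intro l h1 h2 i j
    rw [hWmid l h1 h2 i j]
    obtain ⟨hP, hN, -, -⟩ := hparts l h1 (by omega)
    obtain ⟨hP', hN', -, -⟩ := hparts (l + 1) (by omega) (by omega)
    by_cases hc : (Ppart (l + 1) i ∧ Ppart l j) ∨ (¬ Ppart (l + 1) i ∧ ¬ Ppart l j)
    · rw [if_pos hc]
      rcases hc with ⟨hi, hj⟩ | ⟨hi, hj⟩
      · exact mul_nonneg (mul_nonneg (by positivity) (hP' i hi)) (hP j hj)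
      · have h3 : 0 ≤ (-rr (l + 1) i) * (-rr l j) :=
          mul_nonneg (neg_nonneg.mpr (hN' i hi)) (neg_nonneg.mpr (hN j hj))
        nlinarith [mul_nonneg (Real.sqrt_nonneg 2) hu.le]
    · rw [if_neg hc]
  have key : ∀ x : Fin (dims 0) → ℝ,
      (hid x (K + 2 + 1) = g x (K + 2 + 1)) ∧
      (hid x (K + 2 + 1) = (1 / 2 : ℝ) • p x (K + 2 + 1)) ∧
      (∀ i, hid x (K + 2 + 1) i = (u / Real.sqrt 2) ^ (K + 2 + 1) * ∑ j, r j * x j) := by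
    intro x
    set s : ℝ := ∑ j, r j * x j with hs_def
    set a : ℝ := max s 0 with ha_def
    set b : ℝ := max (-s) 0 with hb_def
    have ha : 0 ≤ a := le_max_right _ _
    have hb : 0 ≤ b := le_max_right _ _
    have hab : a - b = s := by
      rw [ha_def, hb_def]
      rcases le_total s 0 with h | h
      · rw [max_eq_right h, max_eq_left (neg_nonneg.mpr h)]; ring
      · rw [max_eq_left h, max_eq_right (neg_nonpos.mpr h)]; ring
    have hid1' : ∀ j, (W 0 *ᵥ x) j = u * rr 1 j * s := by
      intro j
      simp only [Matrix.mulVec, dotProduct]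
      calc ∑ k, W 0 j k * x k = ∑ k, u * rr 1 j * (r k * x k) :=
            Finset.sum_congr rfl fun k _ => by rw [hW1 j k]; ring
        _ = u * rr 1 j * s := by rw [← Finset.mul_sum, ← hs_def]
    have relu1 : ∀ j, max ((W 0 *ᵥ x) j) 0
        = Real.sqrt 2 * (u / Real.sqrt 2) ^ 1 * rr 1 j * (if Ppart 1 j then a else -b) := by
      intro j
      obtain ⟨hP, hN, -, -⟩ := hparts 1 le_rfl (by omega)
      have hc1 : Real.sqrt 2 * (u / Real.sqrt 2) ^ 1 = u := by rw [pow_one, e2]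
      rw [hid1' j, hc1]
      by_cases hj : Ppart 1 j
      · rw [if_pos hj, ha_def]
        exact aux_relu (u * rr 1 j) s (mul_nonneg hu.le (hP j hj))
      · rw [if_neg hj, hb_def]
        have h1 : 0 ≤ -(u * rr 1 j) :=
          neg_nonneg.mpr (mul_nonpos_of_nonneg_of_nonpos hu.le (hN j hj))
        have h2 : u * rr 1 j * s = -(u * rr 1 j) * (-s) := by ring
        rw [h2, aux_relu _ _ h1]; ring
    have step : ∀ l, 1 ≤ l → l ≤ K + 1 → ∀ (tP tN : ℝ) (v : Fin (dims l) → ℝ),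
        (∀ j, v j = Real.sqrt 2 * (u / Real.sqrt 2) ^ l * rr l j
            * (if Ppart l j then tP else tN)) →
        ∀ i, (W l *ᵥ v) i = Real.sqrt 2 * (u / Real.sqrt 2) ^ (l + 1) * rr (l + 1) i
            * (if Ppart (l + 1) i then tP else tN) := by
      intro l h1 h2 tP tN v hv i
      obtain ⟨-, -, hsP, hsN⟩ := hparts l h1 (by omega)
      by_cases hi : Ppart (l + 1) i
      · have h0 : (W l *ᵥ v) i = (Real.sqrt 2 * u * rr (l + 1) i)
            * ∑ j, (if Ppart l j then rr l j * v j else 0) := by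
          simp only [Matrix.mulVec, dotProduct, Finset.mul_sum]
          refine Finset.sum_congr rfl fun j _ => ?_
          rw [hWmid l h1 (by omega) i j]
          by_cases hj : Ppart l j
          · rw [if_pos (Or.inl ⟨hi, hj⟩), if_pos hj]; ring
          · have hcond : ¬ ((Ppart (l + 1) i ∧ Ppart l j)
                ∨ (¬ Ppart (l + 1) i ∧ ¬ Ppart l j)) := by tauto
            rw [if_neg hcond, if_neg hj]; ring
        rw [h0, aux_half_sum (Ppart l) (rr l) v hsP
            (Real.sqrt 2 * (u / Real.sqrt 2) ^ l * tP)
            (fun j hj => by rw [hv j, if_pos hj]; ring), if_pos hi]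
        linear_combination (u * rr (l + 1) i * (u / Real.sqrt 2) ^ l * tP / 2) * e1
          - (rr (l + 1) i * (u / Real.sqrt 2) ^ l * tP) * e2
      · have h0 : (W l *ᵥ v) i = (Real.sqrt 2 * u * rr (l + 1) i)
            * ∑ j, (if ¬ Ppart l j then rr l j * v j else 0) := by
          simp only [Matrix.mulVec, dotProduct, Finset.mul_sum]
          refine Finset.sum_congr rfl fun j _ => ?_
          rw [hWmid l h1 (by omega) i j]
          by_cases hj : Ppart l j
          · have hcond : ¬ ((Ppart (l + 1) i ∧ Ppart l j)
                ∨ (¬ Ppart (l + 1) i ∧ ¬ Ppart l j)) := by tauto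
            rw [if_neg hcond, if_neg (not_not_intro hj)]; ring
          · rw [if_pos (Or.inr ⟨hi, hj⟩), if_pos hj]; ring
        rw [h0, aux_half_sum (fun j => ¬ Ppart l j) (rr l) v hsN
            (Real.sqrt 2 * (u / Real.sqrt 2) ^ l * tN)
            (fun j hj => by rw [hv j, if_neg hj]; ring), if_neg hi]
        linear_combination (u * rr (l + 1) i * (u / Real.sqrt 2) ^ l * tN / 2) * e1
          - (rr (l + 1) i * (u / Real.sqrt 2) ^ l * tN) * e2
    have sign_aux : ∀ l, 1 ≤ l → l ≤ K + 2 → ∀ j,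
        0 ≤ Real.sqrt 2 * (u / Real.sqrt 2) ^ l * rr l j
            * (if Ppart l j then a else -b) := by
      intro l h1 h2 j
      obtain ⟨hP, hN, -, -⟩ := hparts l h1 (by omega)
      have hC : (0:ℝ) ≤ Real.sqrt 2 * (u / Real.sqrt 2) ^ l := by positivity
      by_cases hj : Ppart l j
      · rw [if_pos hj]
        exact mul_nonneg (mul_nonneg hC (hP j hj)) ha
      · rw [if_neg hj]
        nlinarith [mul_nonneg (mul_nonneg hC hb) (neg_nonneg.mpr (hN j hj))]
    have hidinv : ∀ l, 2 ≤ l → l ≤ K + 2 → ∀ i,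
        hid x l i = Real.sqrt 2 * (u / Real.sqrt 2) ^ l * rr l i
            * (if Ppart l i then a else -b) := by
      intro l hl
      induction l, hl using Nat.le_induction with
      | base =>
        intro _ i
        show hid x (1 + 1) i = _
        rw [hidrec x 1 le_rfl]
        exact step 1 le_rfl (by omega) a (-b) _
          (fun j => by simp only [hid1 x]; exact relu1 j) i
      | succ n hn ih =>
        intro hle i
        rw [hidrec x n (by omega)]
        refine step n (by omega) (by omega) a (-b) _ (fun j => ?_) i
        have hnn : 0 ≤ hid x n j := by
          rw [ih (by omega) j]
          exact sign_aux n (by omega) (by omega) j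
        show max (hid x n j) 0 = _
        rw [max_eq_left hnn]
        exact ih (by omega) j
    have hidnn : ∀ l, 2 ≤ l → l ≤ K + 2 → ∀ j, 0 ≤ hid x l j := by
      intro l h1 h2 j
      rw [hidinv l h1 h2 j]
      exact sign_aux l (by omega) h2 j
    have pinv : ∀ l, 1 ≤ l → l ≤ K + 2 → ∀ i,
        p x l i = Real.sqrt 2 * (u / Real.sqrt 2) ^ l * rr l i * s := by
      intro l hl
      induction l, hl using Nat.le_induction with
      | base =>
        intro _ i
        rw [p1 x, hid1' i, pow_one, e2]
      | succ n hn ih =>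
        intro hle i
        rw [prec x n (by omega)]
        rw [step n hn (by omega) s s (p x n)
          (fun j => by rw [ih (by omega) j, ite_self]) i, ite_self]
    have ginv : ∀ l, 2 ≤ l → l ≤ K + 2 + 1 → g x l = hid x l := by
      intro l hl
      induction l, hl using Nat.le_induction with
      | base =>
        intro _
        show g x (1 + 1) = hid x (1 + 1)
        rw [grec x 1 le_rfl, hidrec x 1 le_rfl, g1 x]
        congr 1
        funext j
        simp only [hid1 x]
      | succ n hn ih =>
        intro hle
        have hfun : (fun i => max (hid x n i) 0) = hid x n :=
          funext fun j => max_eq_left (hidnn n hn (by omega) j)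
        rw [grec x n (by omega), hidrec x n (by omega), hfun, ih (by omega)]
    have lastsum : ∀ (v : Fin (dims (K + 2)) → ℝ) (kP kN : ℝ),
        (∀ j, Ppart (K + 2) j → v j = kP * rr (K + 2) j) →
        (∀ j, ¬ Ppart (K + 2) j → v j = kN * rr (K + 2) j) →
        ∀ i, (W (K + 2) *ᵥ v) i = u * (kP / 2 + kN / 2) := by
      intro v kP kN hvP hvN i
      obtain ⟨-, -, hsP, hsN⟩ := hparts (K + 2) (by omega) (by omega)
      have h0 : (W (K + 2) *ᵥ v) i
          = u * ((∑ j, if Ppart (K + 2) j then rr (K + 2) j * v j else 0)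
              + ∑ j, if ¬ Ppart (K + 2) j then rr (K + 2) j * v j else 0) := by
        simp only [Matrix.mulVec, dotProduct]
        rw [← Finset.sum_add_distrib, Finset.mul_sum]
        refine Finset.sum_congr rfl fun j _ => ?_
        rw [hWL' i j]
        by_cases hj : Ppart (K + 2) j
        · rw [if_pos hj, if_neg (not_not_intro hj)]; ring
        · rw [if_neg hj, if_pos hj]; ring
      rw [h0, aux_half_sum _ _ _ hsP kP hvP, aux_half_sum _ _ _ hsN kN hvN]
    have hidL : ∀ i, hid x (K + 2 + 1) i = (u / Real.sqrt 2) ^ (K + 2 + 1) * s := by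
      intro i
      rw [hidrec x (K + 2) (by omega)]
      rw [lastsum (fun j => max (hid x (K + 2) j) 0)
          (Real.sqrt 2 * (u / Real.sqrt 2) ^ (K + 2) * a)
          (Real.sqrt 2 * (u / Real.sqrt 2) ^ (K + 2) * (-b))
          (fun j hj => by
            show max (hid x (K + 2) j) 0 = _
            rw [max_eq_left (hidnn (K + 2) (by omega) le_rfl j),
              hidinv (K + 2) (by omega) le_rfl j, if_pos hj]; ring)
          (fun j hj => by
            show max (hid x (K + 2) j) 0 = _
            rw [max_eq_left (hidnn (K + 2) (by omega) le_rfl j),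
              hidinv (K + 2) (by omega) le_rfl j, if_neg hj]; ring)
          i]
      rw [← hab]
      linear_combination ((u / Real.sqrt 2) ^ (K + 2) * (u / Real.sqrt 2) * (a - b) / 2) * e1
        - (Real.sqrt 2 * (u / Real.sqrt 2) ^ (K + 2) * (a - b) / 2) * e2
    have pL : ∀ i, p x (K + 2 + 1) i = 2 * ((u / Real.sqrt 2) ^ (K + 2 + 1) * s) := by
      intro i
      rw [prec x (K + 2) (by omega)]
      rw [lastsum (p x (K + 2))
          (Real.sqrt 2 * (u / Real.sqrt 2) ^ (K + 2) * s)
          (Real.sqrt 2 * (u / Real.sqrt 2) ^ (K + 2) * s)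
          (fun j _ => by rw [pinv (K + 2) (by omega) le_rfl j]; ring)
          (fun j _ => by rw [pinv (K + 2) (by omega) le_rfl j]; ring) i]
      linear_combination ((u / Real.sqrt 2) ^ (K + 2) * (u / Real.sqrt 2) * s) * e1
        - (Real.sqrt 2 * (u / Real.sqrt 2) ^ (K + 2) * s) * e2
    refine ⟨(ginv (K + 2 + 1) (by omega) le_rfl).symm, ?_, hidL⟩
    funext i
    rw [Pi.smul_apply, smul_eq_mul, hidL i, pL i]
    ring
  exact ⟨Wnn, fun x => (key x).1, fun x => (key x).2.1, fun x i => (key x).2.2 i⟩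
end
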